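/- arXiv:1903.10241 — 5 statements merged into one kernel-verified Lean document; each statement's English description precedes it below -/
import Mathlib

section
/- For any density matrix σ_{AB} on a bipartite finite-dimensional system A⊗B, the ranks of the reduced states satisfy rank(σ_{AB})·rank(σ_B) ≥ rank(σ_A). -/
open Matrix
open scoped ComplexOrder

/-- Partial trace over the second factor `B`. -/
noncomputable def ptraceB {A B : Type*} [Fintype A] [Fintype B]
    (σ : Matrix (A × B) (A × B) ℂ) : Matrix A A ℂ :=
  Matrix.of fun a a' => ∑ b, σ (a, b) (a', b)

/-- Partial trace over the first factor `A`. -/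
noncomputable def ptraceA {A B : Type*} [Fintype A] [Fintype B]
    (σ : Matrix (A × B) (A × B) ℂ) : Matrix B B ℂ :=
  Matrix.of fun b b' => ∑ a, σ (a, b) (a, b')

open scoped Kronecker

section Aux

/-- The rank of a finite sum of matrices is at most the sum of the ranks. -/
lemma aux_rank_finset_sum_le {m n ι : Type*} [Fintype m] [Fintype n] [DecidableEq n]
    (s : Finset ι) (f : ι → Matrix m n ℂ) :
    (∑ i ∈ s, f i).rank ≤ ∑ i ∈ s, (f i).rank := by
  classical
  induction s using Finset.induction_on with
  | empty => simp [Matrix.rank_zero]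
  | insert _ _ hx ih =>
    rename_i a t
    rw [Finset.sum_insert hx, Finset.sum_insert hx]
    refine le_trans ?_ (Nat.add_le_add_left ih _)
    unfold Matrix.rank
    rw [Matrix.mulVecLin_add]
    have hsub : LinearMap.range ((f a).mulVecLin + (∑ i ∈ t, f i).mulVecLin) ≤
        LinearMap.range (f a).mulVecLin ⊔ LinearMap.range (∑ i ∈ t, f i).mulVecLin := by
      rintro _ ⟨x, rfl⟩
      exact Submodule.add_mem_sup ⟨x, rfl⟩ ⟨x, rfl⟩
    refine le_trans (Submodule.finrank_mono hsub) ?_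
    exact Submodule.finrank_add_le_finrank_add_finrank _ _

/-- A positive semidefinite matrix with zero trace is zero. -/
lemma aux_psd_trace_eq_zero {n : Type*} [Fintype n] {M : Matrix n n ℂ}
    (h : M.PosSemidef) (ht : M.trace = 0) : M = 0 := by
  obtain ⟨C, rfl⟩ : ∃ C : Matrix n n ℂ, M = Cᴴ * C := by
    classical
    open scoped MatrixOrder in
    exact CStarAlgebra.nonneg_iff_eq_star_mul_self.mp h.nonneg
  rw [Matrix.conjTranspose_mul_self_eq_zero]
  have : ∀ i j, C i j = 0 := by
    have h2 : ∑ j, ∑ i, star (C i j) * C i j = 0 := by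
      simpa [Matrix.trace, Matrix.diag, Matrix.mul_apply] using ht
    intro i j
    have hnn : ∀ j ∈ (Finset.univ : Finset n), (0:ℂ) ≤ ∑ i, star (C i j) * C i j :=
      fun j _ => Finset.sum_nonneg fun i _ => star_mul_self_nonneg _
    have h3 := (Finset.sum_eq_zero_iff_of_nonneg hnn).mp h2 j (Finset.mem_univ j)
    have h4 := (Finset.sum_eq_zero_iff_of_nonneg
      (fun i _ => star_mul_self_nonneg (C i j))).mp h3 i (Finset.mem_univ i)
    simpa [mul_comm, mul_eq_zero] using h4
  exact Matrix.ext this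

variable {A B : Type*} [Fintype A] [Fintype B] [DecidableEq A] [DecidableEq B]

lemma aux_kron_conjT (U : Matrix B B ℂ) :
    ((1 : Matrix A A ℂ) ⊗ₖ U)ᴴ = (1 : Matrix A A ℂ) ⊗ₖ Uᴴ := by
  ext ⟨a, b⟩ ⟨a', b'⟩
  simp [Matrix.conjTranspose_apply, Matrix.one_apply, apply_ite (starRingEnd ℂ)]
  aesop

lemma aux_ptraceA_conj (σ : Matrix (A × B) (A × B) ℂ) (U : Matrix B B ℂ) :
    ptraceA (((1 : Matrix A A ℂ) ⊗ₖ Uᴴ) * σ * ((1 : Matrix A A ℂ) ⊗ₖ U)) =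
      Uᴴ * ptraceA σ * U := by
  ext b b'
  simp only [ptraceA, Matrix.of_apply, Matrix.mul_apply, Fintype.sum_prod_type,
    Matrix.kroneckerMap_apply, Matrix.one_apply, Matrix.conjTranspose_apply,
    ite_mul, one_mul, zero_mul, mul_ite, mul_zero, mul_one,
    Finset.sum_ite_irrel, Finset.sum_const_zero,
    Finset.sum_ite_eq, Finset.sum_ite_eq', Finset.mem_univ, if_true]
  simp only [Finset.sum_mul, Finset.mul_sum]
  rw [Finset.sum_comm]
  refine Finset.sum_congr rfl fun x _ => ?_
  rw [Finset.sum_comm]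

lemma aux_ptraceB_conj (σ : Matrix (A × B) (A × B) ℂ) (U : Matrix B B ℂ)
    (hU : U * Uᴴ = 1) :
    ptraceB (((1 : Matrix A A ℂ) ⊗ₖ Uᴴ) * σ * ((1 : Matrix A A ℂ) ⊗ₖ U)) =
      ptraceB σ := by
  have key : ∀ b₁ b₂ : B, (∑ b, star (U b₁ b) * U b₂ b) = if b₁ = b₂ then 1 else 0 := by
    intro b₁ b₂
    have h : (U * Uᴴ) b₂ b₁ = (1 : Matrix B B ℂ) b₂ b₁ := by rw [hU]
    simp only [Matrix.mul_apply, Matrix.one_apply, Matrix.conjTranspose_apply] at h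
    rw [show (∑ b, star (U b₁ b) * U b₂ b) = ∑ b, U b₂ b * star (U b₁ b) from
      Finset.sum_congr rfl fun x _ => mul_comm _ _, h]
    by_cases hbb : b₁ = b₂ <;> simp [hbb, eq_comm]
  ext a a'
  simp only [ptraceB, Matrix.of_apply, Matrix.mul_apply, Fintype.sum_prod_type,
    Matrix.kroneckerMap_apply, Matrix.one_apply, Matrix.conjTranspose_apply,
    ite_mul, one_mul, zero_mul, mul_ite, mul_zero, mul_one,
    Finset.sum_ite_irrel, Finset.sum_const_zero,
    Finset.sum_ite_eq, Finset.sum_ite_eq', Finset.mem_univ, if_true]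
  simp only [Finset.sum_mul, Finset.mul_sum]
  conv_lhs => rw [Finset.sum_comm]
  refine Eq.trans (Finset.sum_congr rfl fun x_1 _ => Finset.sum_comm) ?_
  rw [Finset.sum_comm]
  refine Finset.sum_congr rfl fun i _ => ?_
  have h1 : ∀ x_1, (∑ x, (starRingEnd ℂ) (U i x) * σ (a,i) (a',x_1) * U x_1 x)
      = σ (a,i) (a',x_1) * (if i = x_1 then (1:ℂ) else 0) := fun x_1 => by
    rw [show ((if i = x_1 then (1:ℂ) else 0) = ∑ b, star (U i b) * U x_1 b) from (key i x_1).symm,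
      Finset.mul_sum]
    exact Finset.sum_congr rfl fun x _ => by rw [RCLike.star_def]; ring
  simp [h1]

/-- The slice projection matrix: picks out the `b`-th block. -/
noncomputable def auxE (b : B) : Matrix A (A × B) ℂ :=
  Matrix.of fun a p => if p = (a, b) then 1 else 0

lemma aux_slice_eq (τ : Matrix (A × B) (A × B) ℂ) (b : B) :
    auxE (A := A) b * τ * (auxE (A := A) b)ᴴ = Matrix.of fun a a' => τ (a, b) (a', b) := by
  ext a a'
  simp [auxE, Matrix.mul_apply, Matrix.conjTranspose_apply, Fintype.sum_prod_type,
    apply_ite (starRingEnd ℂ)]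

lemma aux_ptraceB_eq_sum (τ : Matrix (A × B) (A × B) ℂ) :
    ptraceB τ = ∑ b : B, auxE (A := A) b * τ * (auxE (A := A) b)ᴴ := by
  ext a a'
  simp [aux_slice_eq, ptraceB, Matrix.sum_apply]

lemma aux_trace_slice (τ : Matrix (A × B) (A × B) ℂ) (b : B) :
    (auxE (A := A) b * τ * (auxE (A := A) b)ᴴ).trace = ptraceA τ b b := by
  rw [aux_slice_eq]
  simp [Matrix.trace, Matrix.diag, ptraceA]

lemma aux_ptraceA_hermitian {σ : Matrix (A × B) (A × B) ℂ} (hσ : σ.IsHermitian) :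
    (ptraceA σ).IsHermitian := by
  ext b b'
  simp only [Matrix.conjTranspose_apply, ptraceA, Matrix.of_apply, star_sum]
  exact Finset.sum_congr rfl fun a _ => by
    have := congrFun (congrFun hσ (a, b)) (a, b')
    simpa [Matrix.conjTranspose_apply] using this

end Aux

/-- For any density matrix `σ` on `A ⊗ B`, `rank(σ_A) ≤ rank(σ_AB) · rank(σ_B)`. -/
theorem rank_reduced_le_rank_mul_rank
    {A B : Type*} [Fintype A] [Fintype B] [DecidableEq A] [DecidableEq B]
    (σ : Matrix (A × B) (A × B) ℂ) (hσ : σ.PosSemidef) (htr : σ.trace = 1) :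
    (ptraceB σ).rank ≤ σ.rank * (ptraceA σ).rank := by
  classical
  have hB : (ptraceA σ).IsHermitian := aux_ptraceA_hermitian hσ.1
  set V : Matrix B B ℂ := (hB.eigenvectorUnitary : Matrix B B ℂ) with hV
  set d : B → ℝ := hB.eigenvalues with hd
  have hVV : V * Vᴴ = 1 := by
    have := (Matrix.mem_unitaryGroup_iff).mp hB.eigenvectorUnitary.2
    simpa [Matrix.star_eq_conjTranspose] using this
  have hVV' : Vᴴ * V = 1 := by
    have := (Matrix.mem_unitaryGroup_iff').mp hB.eigenvectorUnitary.2
    simpa [Matrix.star_eq_conjTranspose] using this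
  set W : Matrix (A × B) (A × B) ℂ := (1 : Matrix A A ℂ) ⊗ₖ V with hW
  have hWconj : Wᴴ = (1 : Matrix A A ℂ) ⊗ₖ Vᴴ := aux_kron_conjT V
  have hWW : W * Wᴴ = 1 := by
    rw [hWconj, hW, ← Matrix.mul_kronecker_mul, Matrix.one_mul, hVV, Matrix.one_kronecker_one]
  have hWW' : Wᴴ * W = 1 := by
    rw [hWconj, hW, ← Matrix.mul_kronecker_mul, Matrix.one_mul, hVV', Matrix.one_kronecker_one]
  have hdetW : IsUnit W.det := by
    have := congrArg Matrix.det hWW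
    rw [Matrix.det_mul, Matrix.det_one] at this
    exact IsUnit.of_mul_eq_one _ this
  have hdetWH : IsUnit Wᴴ.det := by
    have := congrArg Matrix.det hWW'
    rw [Matrix.det_mul, Matrix.det_one] at this
    exact IsUnit.of_mul_eq_one _ this
  set τ : Matrix (A × B) (A × B) ℂ := Wᴴ * σ * W with hτdef
  have hτ : τ.PosSemidef := by
    have := hσ.mul_mul_conjTranspose_same Wᴴ
    rwa [Matrix.conjTranspose_conjTranspose] at this
  -- ranks of τ and σ agree
  have hrankτ : τ.rank = σ.rank := by
    rw [hτdef, Matrix.rank_mul_eq_left_of_isUnit_det W (Wᴴ * σ) hdetW,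
      Matrix.rank_mul_eq_right_of_isUnit_det Wᴴ σ hdetWH]
  -- ptraceB τ = ptraceB σ
  have hptB : ptraceB τ = ptraceB σ := by
    rw [hτdef, hW, aux_kron_conjT V]
    exact aux_ptraceB_conj σ V hVV
  -- ptraceA τ is diagonal
  have hptA : ptraceA τ = Matrix.diagonal (RCLike.ofReal ∘ d) := by
    rw [hτdef, hW, aux_kron_conjT V, aux_ptraceA_conj σ V]
    conv_lhs => rw [hB.spectral_theorem, Unitary.conjStarAlgAut_apply]
    rw [Matrix.star_eq_conjTranspose]
    rw [show Vᴴ * (V * Matrix.diagonal (RCLike.ofReal ∘ d) * Vᴴ) * V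
        = (Vᴴ * V) * Matrix.diagonal (RCLike.ofReal ∘ d) * (Vᴴ * V) by
      simp only [Matrix.mul_assoc]]
    rw [hVV', Matrix.one_mul, Matrix.mul_one]
  -- rank of ptraceA σ
  have hrankA : (ptraceA σ).rank = (ptraceA τ).rank := by
    rw [hτdef, hW, aux_kron_conjT V, aux_ptraceA_conj σ V]
    have h1 : IsUnit V.det := by
      have := congrArg Matrix.det hVV
      rw [Matrix.det_mul, Matrix.det_one] at this
      exact IsUnit.of_mul_eq_one _ this
    have h2 : IsUnit Vᴴ.det := by
      have := congrArg Matrix.det hVV'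
      rw [Matrix.det_mul, Matrix.det_one] at this
      exact IsUnit.of_mul_eq_one _ this
    rw [Matrix.rank_mul_eq_left_of_isUnit_det V (Vᴴ * ptraceA σ) h1,
      Matrix.rank_mul_eq_right_of_isUnit_det Vᴴ (ptraceA σ) h2]
  set S : Finset B := Finset.univ.filter (fun b => d b ≠ 0) with hS
  have hcardS : (ptraceA τ).rank = S.card := by
    rw [hptA, Matrix.rank_diagonal]
    rw [Fintype.card_subtype]
    refine congrArg Finset.card ?_
    refine Finset.filter_congr fun b _ => ?_
    simp [Function.comp, RCLike.ofReal_eq_zero]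
  -- zero blocks
  have hzero : ∀ b ∉ S, auxE (A := A) b * τ * (auxE (A := A) b)ᴴ = (0 : Matrix A A ℂ) := by
    intro b hb
    refine aux_psd_trace_eq_zero (hτ.mul_mul_conjTranspose_same (auxE b)) ?_
    rw [aux_trace_slice, hptA]
    simp only [hS, Finset.mem_filter, Finset.mem_univ, true_and, not_not] at hb
    simp [hb]
  -- main estimate
  have hmain : (ptraceB τ).rank ≤ S.card * τ.rank := by
    rw [aux_ptraceB_eq_sum τ]
    rw [show (∑ b : B, auxE (A := A) b * τ * (auxE (A := A) b)ᴴ) = ∑ b ∈ S, auxE (A := A) b * τ * (auxE (A := A) b)ᴴ from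
      (Finset.sum_subset (Finset.subset_univ S) (fun b _ hb => hzero b hb)).symm]
    refine le_trans (aux_rank_finset_sum_le S _) ?_
    have hterm : ∀ b ∈ S, (auxE (A := A) b * τ * (auxE (A := A) b)ᴴ).rank ≤ τ.rank := by
      intro b _
      exact le_trans (Matrix.rank_mul_le_left _ _) (Matrix.rank_mul_le_right _ _)
    calc ∑ b ∈ S, (auxE (A := A) b * τ * (auxE (A := A) b)ᴴ).rank
        ≤ ∑ _b ∈ S, τ.rank := by exact Finset.sum_le_sum hterm
      _ = S.card * τ.rank := by rw [Finset.sum_const, smul_eq_mul]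
  calc (ptraceB σ).rank = (ptraceB τ).rank := by rw [hptB]
    _ ≤ S.card * τ.rank := hmain
    _ = σ.rank * (ptraceA σ).rank := by
        rw [hrankτ, hrankA, hcardS, mul_comm]
end

section
/- Given density matrices τ_A on system A and τ_B on system B (finite-dimensional), there exists a density matrix σ_{AB} on A⊗B such that Tr_B(σ_{AB}) = τ_A, Tr_A(σ_{AB}) = τ_B, and rank(σ_{AB}) ≤ max(rank(τ_A), rank(τ_B)). -/
open Matrix
open scoped ComplexOrder

lemma trace_ptraceB {A B : Type*} [Fintype A] [Fintype B]
    (σ : Matrix (A × B) (A × B) ℂ) : (ptraceB σ).trace = σ.trace := by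
  simp [ptraceB, Matrix.trace, Matrix.diag, Fintype.sum_prod_type]

lemma spec_apply' {A : Type*} [Fintype A] [DecidableEq A] (τ : Matrix A A ℂ) (h : τ.IsHermitian)
    (a a' : A) :
    τ a a' = ∑ i, (h.eigenvalues i : ℂ) * (h.eigenvectorUnitary : Matrix A A ℂ) a i *
      (starRingEnd ℂ) ((h.eigenvectorUnitary : Matrix A A ℂ) a' i) := by
  have cast_eq : ∀ x : ℝ, (RCLike.ofReal x : ℂ) = (x : ℂ) := fun x => by norm_cast
  conv_lhs => rw [h.spectral_theorem, Unitary.conjStarAlgAut_apply]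
  rw [Matrix.mul_apply]
  refine Finset.sum_congr rfl fun j _ => ?_
  rw [Matrix.mul_apply, Finset.sum_mul]
  rw [Finset.sum_eq_single j]
  · simp only [Matrix.diagonal_apply_eq, Matrix.star_apply, Complex.star_def,
      Function.comp_apply, cast_eq]
    ring
  · intro b _ hb
    simp only [Matrix.diagonal_apply_ne _ hb, mul_zero, zero_mul]
  · simp

lemma orth_cols {A : Type*} [Fintype A] [DecidableEq A] (τ : Matrix A A ℂ) (h : τ.IsHermitian)
    (i j : A) :
    ∑ a, (starRingEnd ℂ) ((h.eigenvectorUnitary : Matrix A A ℂ) a i) *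
      (h.eigenvectorUnitary : Matrix A A ℂ) a j = if i = j then 1 else 0 := by
  have h1 : (star (h.eigenvectorUnitary : Matrix A A ℂ)) * h.eigenvectorUnitary = 1 :=
    Matrix.mem_unitaryGroup_iff'.mp h.eigenvectorUnitary.2
  have := congr_fun (congr_fun h1 i) j
  simpa [Matrix.mul_apply, Matrix.one_apply, Matrix.star_apply] using this

lemma core {A B : Type*} [Fintype A] [Fintype B] [DecidableEq A] [DecidableEq B]
    (U : Matrix A A ℂ) (V : Matrix B B ℂ) (p : A → ℝ) (q : B → ℝ)
    (orthU : ∀ i j, ∑ a, (starRingEnd ℂ) (U a i) * U a j = if i = j then 1 else 0)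
    (orthV : ∀ i j, ∑ b, (starRingEnd ℂ) (V b i) * V b j = if i = j then 1 else 0)
    (hp0 : ∀ i, 0 ≤ p i) (hq0 : ∀ j, 0 ≤ q j)
    (hp1 : ∑ i, p i = 1) (hq1 : ∑ j, q j = 1)
    (hmn : Fintype.card {i // p i ≠ 0} ≤ Fintype.card {j // q j ≠ 0}) :
    ∃ σ : Matrix (A × B) (A × B) ℂ, σ.PosSemidef ∧
      ptraceB σ = Matrix.of (fun a a' => ∑ i, (p i : ℂ) * U a i * (starRingEnd ℂ) (U a' i)) ∧
      ptraceA σ = Matrix.of (fun b b' => ∑ j, (q j : ℂ) * V b j * (starRingEnd ℂ) (V b' j)) ∧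
      σ.rank ≤ Fintype.card {j // q j ≠ 0} := by
  classical
  set m := Fintype.card {i // p i ≠ 0} with hm
  set n := Fintype.card {j // q j ≠ 0} with hn
  -- n ≠ 0
  have hn0 : n ≠ 0 := by
    intro h0
    have hempty : IsEmpty {j // q j ≠ 0} := Fintype.card_eq_zero_iff.mp (hn ▸ h0)
    have : ∀ j, q j = 0 := fun j => by
      by_contra hj; exact hempty.elim ⟨j, hj⟩
    rw [Finset.sum_congr rfl (fun j _ => this j)] at hq1
    simp at hq1
  haveI : NeZero n := ⟨hn0⟩
  set g : Fin m ≃ {i // p i ≠ 0} := (Fintype.equivFin {i // p i ≠ 0}).symm with hg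
  set h : Fin n ≃ {j // q j ≠ 0} := (Fintype.equivFin {j // q j ≠ 0}).symm with hh
  set ι : Fin m → Fin n := Fin.castLE hmn with hι
  -- the pairing index
  set jf : Fin m → Fin n → B := fun i k => (h (ι i + k) : B) with hjf
  have jf_inj : ∀ (k : Fin n) (i i' : Fin m), jf i k = jf i' k ↔ i = i' := by
    intro k i i'
    constructor
    · intro hval
      have : (h (ι i + k) : {j // q j ≠ 0}) = h (ι i' + k) := Subtype.ext hval
      have := h.injective this
      have := add_right_cancel this
      exact Fin.castLE_injective hmn this
    · rintro rfl; rfl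
  set c : Fin m → Fin n → ℝ := fun i k => Real.sqrt (p (g i)) * Real.sqrt (q (jf i k)) with hc
  have csq : ∀ i k, (c i k : ℂ) * (c i k : ℂ) = ((p (g i) : ℂ)) * ((q (jf i k) : ℂ)) := by
    intro i k
    rw [← Complex.ofReal_mul, ← Complex.ofReal_mul]
    congr 1
    rw [hc]
    have := Real.mul_self_sqrt (hp0 (g i))
    have := Real.mul_self_sqrt (hq0 (jf i k))
    ring_nf
    rw [Real.sq_sqrt (hp0 (g i)), Real.sq_sqrt (hq0 (jf i k))]
  set M : Matrix (Fin n) (A × B) ℂ := Matrix.of (fun k x =>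
    ∑ i, (c i k : ℂ) * (starRingEnd ℂ) (U x.1 (g i)) * (starRingEnd ℂ) (V x.2 (jf i k)))
    with hM
  refine ⟨Mᴴ * M, Matrix.posSemidef_conjTranspose_mul_self M, ?_, ?_, ?_⟩
  · -- ptraceB = τA form
    have hσ : ∀ (x y : A × B), (Mᴴ * M) x y =
        ∑ k, (∑ i, (c i k : ℂ) * U x.1 (g i) * V x.2 (jf i k)) *
          (∑ i, (c i k : ℂ) * (starRingEnd ℂ) (U y.1 (g i)) *
            (starRingEnd ℂ) (V y.2 (jf i k))) := by
      intro x y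
      rw [Matrix.mul_apply]
      refine Finset.sum_congr rfl fun k _ => ?_
      rw [Matrix.conjTranspose_apply, hM]
      simp only [Matrix.of_apply]
      congr 1
      rw [star_sum]
      refine Finset.sum_congr rfl fun i _ => ?_
      simp only [star_mul', Complex.star_def, Complex.conj_conj, Complex.conj_ofReal]
    -- subtype sums equal full sums
    have hsubq : ∑ s : {j // q j ≠ 0}, q s = ∑ j, q j := by
      rw [← Finset.sum_subtype (Finset.univ.filter fun j => q j ≠ 0) (by simp) q]
      exact Finset.sum_filter_of_ne (by tauto)
    have hsumq : ∀ i : Fin m, ∑ k, q (jf i k) = 1 := by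
      intro i
      have h1 : ∑ k, q (jf i k) = ∑ s : {j // q j ≠ 0}, q s :=
        Equiv.sum_comp ((Equiv.addLeft (ι i)).trans h) (fun s => q s)
      rw [h1, hsubq, hq1]
    ext a a'
    simp only [ptraceB, Matrix.of_apply]
    calc ∑ b, (Mᴴ * M) (a, b) (a', b)
        = ∑ b, ∑ k, (∑ i, (c i k : ℂ) * U a (g i) * V b (jf i k)) *
            (∑ i', (c i' k : ℂ) * (starRingEnd ℂ) (U a' (g i')) *
              (starRingEnd ℂ) (V b (jf i' k))) :=
          Finset.sum_congr rfl fun b _ => hσ (a, b) (a', b)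
      _ = ∑ k, ∑ i, ((p (g i) : ℂ) * (q (jf i k) : ℂ)) *
            (U a (g i) * (starRingEnd ℂ) (U a' (g i))) := by
          rw [Finset.sum_comm]
          refine Finset.sum_congr rfl fun k _ => ?_
          have expand : ∀ b : B, (∑ i, (c i k : ℂ) * U a (g i) * V b (jf i k)) *
              (∑ i', (c i' k : ℂ) * (starRingEnd ℂ) (U a' (g i')) *
                (starRingEnd ℂ) (V b (jf i' k)))
              = ∑ i, ∑ i', ((c i k : ℂ) * U a (g i) * ((c i' k : ℂ) *
                  (starRingEnd ℂ) (U a' (g i')))) *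
                ((starRingEnd ℂ) (V b (jf i' k)) * V b (jf i k)) := by
            intro b
            rw [Finset.sum_mul_sum]
            exact Finset.sum_congr rfl fun i _ =>
              Finset.sum_congr rfl fun i' _ => by ring
          rw [Finset.sum_congr rfl fun b _ => expand b, Finset.sum_comm]
          refine Finset.sum_congr rfl fun i _ => ?_
          rw [Finset.sum_comm]
          have inner : ∀ i' : Fin m, ∑ b, ((c i k : ℂ) * U a (g i) * ((c i' k : ℂ) *
                (starRingEnd ℂ) (U a' (g i')))) *
                ((starRingEnd ℂ) (V b (jf i' k)) * V b (jf i k))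
              = if i' = i then ((c i k : ℂ) * U a (g i) * ((c i' k : ℂ) *
                (starRingEnd ℂ) (U a' (g i')))) else 0 := by
            intro i'
            rw [← Finset.mul_sum, orthV]
            by_cases hii : i' = i
            · subst hii; simp
            · rw [if_neg (fun hcon => hii ((jf_inj k i' i).mp hcon)), if_neg hii, mul_zero]
          rw [Finset.sum_congr rfl fun i' _ => inner i', Finset.sum_ite_eq' Finset.univ i]
          simp only [Finset.mem_univ, if_true]
          calc (c i k : ℂ) * U a (g i) * ((c i k : ℂ) * (starRingEnd ℂ) (U a' (g i)))
              = ((c i k : ℂ) * (c i k : ℂ)) * (U a (g i) * (starRingEnd ℂ) (U a' (g i))) := by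
                ring
            _ = ((p (g i) : ℂ) * (q (jf i k) : ℂ)) *
                (U a (g i) * (starRingEnd ℂ) (U a' (g i))) := by rw [csq]
      _ = ∑ i : Fin m, (p (g i) : ℂ) * (U a (g i) * (starRingEnd ℂ) (U a' (g i))) := by
          rw [Finset.sum_comm]
          refine Finset.sum_congr rfl fun i _ => ?_
          have : ∀ k : Fin n, ((p (g i) : ℂ) * (q (jf i k) : ℂ)) *
              (U a (g i) * (starRingEnd ℂ) (U a' (g i)))
              = ((p (g i) : ℂ) * (U a (g i) * (starRingEnd ℂ) (U a' (g i)))) *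
                (q (jf i k) : ℂ) := fun k => by ring
          rw [Finset.sum_congr rfl fun k _ => this k, ← Finset.mul_sum]
          have : ∑ k, ((q (jf i k) : ℝ) : ℂ) = ((∑ k, q (jf i k) : ℝ) : ℂ) := by
            push_cast; rfl
          rw [this, hsumq i, Complex.ofReal_one, mul_one]
      _ = ∑ s : {i // p i ≠ 0}, (p (s : A) : ℂ) *
            (U a (s : A) * (starRingEnd ℂ) (U a' (s : A))) :=
          Equiv.sum_comp g (fun s => (p (s : A) : ℂ) *
            (U a (s : A) * (starRingEnd ℂ) (U a' (s : A))))
      _ = ∑ i : A, (p i : ℂ) * U a i * (starRingEnd ℂ) (U a' i) := by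
          rw [← Finset.sum_subtype (Finset.univ.filter fun i => p i ≠ 0) (by simp)
            (fun i => (p i : ℂ) * (U a i * (starRingEnd ℂ) (U a' i)))]
          rw [Finset.sum_filter_of_ne]
          · exact Finset.sum_congr rfl fun i _ => by ring
          · intro x _ hx hpx
            exact hx (by rw [hpx, Complex.ofReal_zero, zero_mul])
  · -- ptraceA = τB form
    have hσ : ∀ (x y : A × B), (Mᴴ * M) x y =
        ∑ k, (∑ i, (c i k : ℂ) * U x.1 (g i) * V x.2 (jf i k)) *
          (∑ i, (c i k : ℂ) * (starRingEnd ℂ) (U y.1 (g i)) *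
            (starRingEnd ℂ) (V y.2 (jf i k))) := by
      intro x y
      rw [Matrix.mul_apply]
      refine Finset.sum_congr rfl fun k _ => ?_
      rw [Matrix.conjTranspose_apply, hM]
      simp only [Matrix.of_apply]
      congr 1
      rw [star_sum]
      refine Finset.sum_congr rfl fun i _ => ?_
      simp only [star_mul', Complex.star_def, Complex.conj_conj, Complex.conj_ofReal]
    have hsubp : ∑ s : {i // p i ≠ 0}, p s = ∑ i, p i := by
      rw [← Finset.sum_subtype (Finset.univ.filter fun i => p i ≠ 0) (by simp) p]
      exact Finset.sum_filter_of_ne (by tauto)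
    have hsump : ∑ i : Fin m, p (g i) = 1 := by
      rw [Equiv.sum_comp g (fun s => p s), hsubp, hp1]
    ext b b'
    simp only [ptraceA, Matrix.of_apply]
    calc ∑ a, (Mᴴ * M) (a, b) (a, b')
        = ∑ a, ∑ k, (∑ i, (c i k : ℂ) * U a (g i) * V b (jf i k)) *
            (∑ i', (c i' k : ℂ) * (starRingEnd ℂ) (U a (g i')) *
              (starRingEnd ℂ) (V b' (jf i' k))) :=
          Finset.sum_congr rfl fun a _ => hσ (a, b) (a, b')
      _ = ∑ k, ∑ i, ((p (g i) : ℂ) * (q (jf i k) : ℂ)) *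
            (V b (jf i k) * (starRingEnd ℂ) (V b' (jf i k))) := by
          rw [Finset.sum_comm]
          refine Finset.sum_congr rfl fun k _ => ?_
          have expand : ∀ a : A, (∑ i, (c i k : ℂ) * U a (g i) * V b (jf i k)) *
              (∑ i', (c i' k : ℂ) * (starRingEnd ℂ) (U a (g i')) *
                (starRingEnd ℂ) (V b' (jf i' k)))
              = ∑ i, ∑ i', ((c i k : ℂ) * V b (jf i k) * ((c i' k : ℂ) *
                  (starRingEnd ℂ) (V b' (jf i' k)))) *
                ((starRingEnd ℂ) (U a (g i')) * U a (g i)) := by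
            intro a
            rw [Finset.sum_mul_sum]
            exact Finset.sum_congr rfl fun i _ =>
              Finset.sum_congr rfl fun i' _ => by ring
          rw [Finset.sum_congr rfl fun a _ => expand a, Finset.sum_comm]
          refine Finset.sum_congr rfl fun i _ => ?_
          rw [Finset.sum_comm]
          have inner : ∀ i' : Fin m, ∑ a, ((c i k : ℂ) * V b (jf i k) * ((c i' k : ℂ) *
                (starRingEnd ℂ) (V b' (jf i' k)))) *
                ((starRingEnd ℂ) (U a (g i')) * U a (g i))
              = if i' = i then ((c i k : ℂ) * V b (jf i k) * ((c i' k : ℂ) *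
                (starRingEnd ℂ) (V b' (jf i' k)))) else 0 := by
            intro i'
            rw [← Finset.mul_sum, orthU]
            by_cases hii : i' = i
            · subst hii; simp
            · have hne : (g i' : A) ≠ (g i : A) := fun hcon =>
                hii (g.injective (Subtype.ext hcon))
              rw [if_neg hne, if_neg hii, mul_zero]
          rw [Finset.sum_congr rfl fun i' _ => inner i', Finset.sum_ite_eq' Finset.univ i]
          simp only [Finset.mem_univ, if_true]
          calc (c i k : ℂ) * V b (jf i k) * ((c i k : ℂ) * (starRingEnd ℂ) (V b' (jf i k)))
              = ((c i k : ℂ) * (c i k : ℂ)) * (V b (jf i k) *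
                  (starRingEnd ℂ) (V b' (jf i k))) := by ring
            _ = ((p (g i) : ℂ) * (q (jf i k) : ℂ)) * (V b (jf i k) *
                  (starRingEnd ℂ) (V b' (jf i k))) := by rw [csq]
      _ = ∑ i : Fin m, (p (g i) : ℂ) *
            ∑ k, (q (jf i k) : ℂ) * (V b (jf i k) * (starRingEnd ℂ) (V b' (jf i k))) := by
          rw [Finset.sum_comm]
          refine Finset.sum_congr rfl fun i _ => ?_
          rw [Finset.mul_sum]
          exact Finset.sum_congr rfl fun k _ => by ring
      _ = ∑ i : Fin m, (p (g i) : ℂ) *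
            ∑ s : {j // q j ≠ 0}, (q (s : B) : ℂ) *
              (V b (s : B) * (starRingEnd ℂ) (V b' (s : B))) := by
          refine Finset.sum_congr rfl fun i _ => ?_
          congr 1
          exact Equiv.sum_comp ((Equiv.addLeft (ι i)).trans h)
            (fun s => (q (s : B) : ℂ) * (V b (s : B) * (starRingEnd ℂ) (V b' (s : B))))
      _ = (∑ i : Fin m, ((p (g i) : ℝ) : ℂ)) *
            ∑ s : {j // q j ≠ 0}, (q (s : B) : ℂ) *
              (V b (s : B) * (starRingEnd ℂ) (V b' (s : B))) := by
          rw [Finset.sum_mul]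
      _ = ∑ j : B, (q j : ℂ) * V b j * (starRingEnd ℂ) (V b' j) := by
          have hc1 : ∑ i : Fin m, ((p (g i) : ℝ) : ℂ) = ((∑ i : Fin m, p (g i) : ℝ) : ℂ) := by
            push_cast; rfl
          rw [hc1, hsump, Complex.ofReal_one, one_mul]
          rw [← Finset.sum_subtype (Finset.univ.filter fun j => q j ≠ 0) (by simp)
            (fun j => (q j : ℂ) * (V b j * (starRingEnd ℂ) (V b' j)))]
          rw [Finset.sum_filter_of_ne]
          · exact Finset.sum_congr rfl fun j _ => by ring
          · intro x _ hx hqx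
            exact hx (by rw [hqx, Complex.ofReal_zero, zero_mul])
  · calc (Mᴴ * M).rank = M.rank := Matrix.rank_conjTranspose_mul_self M
      _ ≤ Fintype.card (Fin n) := Matrix.rank_le_card_height M
      _ = n := Fintype.card_fin n

lemma trace_eq_sum_eigs {A : Type*} [Fintype A] [DecidableEq A] (τ : Matrix A A ℂ)
    (h : τ.IsHermitian) : τ.trace = ∑ i, (h.eigenvalues i : ℂ) := by
  conv_lhs => rw [h.spectral_theorem, Unitary.conjStarAlgAut_apply]
  rw [Matrix.trace_mul_cycle]
  rw [Matrix.mem_unitaryGroup_iff'.mp h.eigenvectorUnitary.2, one_mul]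
  simp [Matrix.trace, Matrix.diagonal]

lemma sum_eigs_one {A : Type*} [Fintype A] [DecidableEq A] (τ : Matrix A A ℂ)
    (h : τ.IsHermitian) (htr : τ.trace = 1) : ∑ i, h.eigenvalues i = 1 := by
  have h1 := trace_eq_sum_eigs τ h
  rw [htr] at h1
  have h2 : ((∑ i, h.eigenvalues i : ℝ) : ℂ) = 1 := by push_cast; rw [← h1]
  exact_mod_cast h2

lemma aux_joint {A B : Type*} [Fintype A] [Fintype B] [DecidableEq A] [DecidableEq B]
    (τA : Matrix A A ℂ) (τB : Matrix B B ℂ)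
    (hA : τA.PosSemidef) (htrA : τA.trace = 1)
    (hB : τB.PosSemidef) (htrB : τB.trace = 1)
    (hr : τA.rank ≤ τB.rank) :
    ∃ σ : Matrix (A × B) (A × B) ℂ, σ.PosSemidef ∧
      ptraceB σ = τA ∧ ptraceA σ = τB ∧ σ.rank ≤ τB.rank := by
  obtain ⟨σ, h1, h2, h3, h4⟩ := core
    (hA.1.eigenvectorUnitary : Matrix A A ℂ) (hB.1.eigenvectorUnitary : Matrix B B ℂ)
    hA.1.eigenvalues hB.1.eigenvalues
    (orth_cols τA hA.1) (orth_cols τB hB.1)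
    hA.eigenvalues_nonneg hB.eigenvalues_nonneg
    (sum_eigs_one τA hA.1 htrA) (sum_eigs_one τB hB.1 htrB)
    (by rw [← hA.1.rank_eq_card_non_zero_eigs, ← hB.1.rank_eq_card_non_zero_eigs]; exact hr)
  refine ⟨σ, h1, ?_, ?_, by rw [hB.1.rank_eq_card_non_zero_eigs]; exact h4⟩
  · rw [h2]; ext a a'; exact (spec_apply' τA hA.1 a a').symm
  · rw [h3]; ext b b'; exact (spec_apply' τB hB.1 b b').symm

/-- Given density matrices `τ_A` on `A` and `τ_B` on `B`, there is a joint density matrix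
`σ_AB` with marginals `τ_A`, `τ_B` and `rank(σ_AB) ≤ max(rank τ_A, rank τ_B)`. -/
theorem exists_joint_state_rank_le_max
    {A B : Type*} [Fintype A] [Fintype B] [DecidableEq A] [DecidableEq B]
    (τA : Matrix A A ℂ) (τB : Matrix B B ℂ)
    (hA : τA.PosSemidef) (htrA : τA.trace = 1)
    (hB : τB.PosSemidef) (htrB : τB.trace = 1) :
    ∃ σ : Matrix (A × B) (A × B) ℂ, σ.PosSemidef ∧ σ.trace = 1 ∧
      ptraceB σ = τA ∧ ptraceA σ = τB ∧ σ.rank ≤ max τA.rank τB.rank := by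
  rcases le_total τA.rank τB.rank with hr | hr
  · obtain ⟨σ, h1, h2, h3, h4⟩ := aux_joint τA τB hA htrA hB htrB hr
    exact ⟨σ, h1, by rw [← trace_ptraceB σ, h2, htrA], h2, h3,
      le_trans h4 (le_max_right _ _)⟩
  · obtain ⟨σ', h1, h2, h3, h4⟩ := aux_joint τB τA hB htrB hA htrA hr
    have e1 : ptraceB (σ'.submatrix Prod.swap Prod.swap) = ptraceA σ' := rfl
    have e2 : ptraceA (σ'.submatrix Prod.swap Prod.swap) = ptraceB σ' := rfl
    have e3 : (σ'.submatrix Prod.swap Prod.swap).rank = σ'.rank :=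
      Matrix.rank_submatrix σ' (Equiv.prodComm A B) (Equiv.prodComm A B)
    refine ⟨σ'.submatrix Prod.swap Prod.swap, h1.submatrix _, ?_, ?_, ?_, ?_⟩
    · rw [← trace_ptraceB _, e1, h3, htrA]
    · rw [e1, h3]
    · rw [e2, h2]
    · rw [e3]; exact le_trans h4 (le_max_left _ _)
end

section
/- Let H = Σ_{i=1}^{N-1} H_{i,i+1} be a translationally invariant nearest-neighbor Hamiltonian on a chain of N sites with each ‖H_{i,i+1}‖ ≤ 1 and ground state energy E_0. Then for any state |η⟩ on the chain and any interval of sites [a, b-1] with 1 ≤ a < b ≤ N, ⟨η| Σ_{i=a}^{b-2} H_{i,i+1} |η⟩ ≥ ((b−a)/(N−1))·E_0 − 1. -/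
open Matrix

/-- Operator norm of a matrix, acting on the Euclidean space. -/
noncomputable def opNorm {n : Type*} [Fintype n] [DecidableEq n]
    (A : Matrix n n ℂ) : ℝ :=
  ‖Matrix.toEuclideanCLM (𝕜 := ℂ) A‖

/-- The nearest-neighbor term `h` acting on sites `i, i+1` of a chain of `N` sites with
local space `α` (identity elsewhere). -/
noncomputable def twoSite (N : ℕ) {α : Type*} [Fintype α] [DecidableEq α]
    (h : Matrix (α × α) (α × α) ℂ) (i : ℕ) (hi : i + 1 < N) :
    Matrix (Fin N → α) (Fin N → α) ℂ :=
  Matrix.of fun x y =>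
    if ∀ j : Fin N, j.val ≠ i → j.val ≠ i + 1 → x j = y j then
      h (x ⟨i, by omega⟩, x ⟨i + 1, hi⟩) (y ⟨i, by omega⟩, y ⟨i + 1, hi⟩)
    else 0

/-- The translationally invariant nearest-neighbor Hamiltonian `H = Σ_{i=0}^{N-2} h_{i,i+1}`. -/
noncomputable def chainH (N : ℕ) {α : Type*} [Fintype α] [DecidableEq α]
    (h : Matrix (α × α) (α × α) ℂ) : Matrix (Fin N → α) (Fin N → α) ℂ :=
  ∑ i : Fin (N - 1), twoSite N h i.val (by have := i.isLt; omega)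

/-- Energy `⟨φ|H|φ⟩` of a state `φ`. -/
noncomputable def energyR {n : Type*} [Fintype n] (H : Matrix n n ℂ) (φ : n → ℂ) : ℝ :=
  (star φ ⬝ᵥ H.mulVec φ).re

noncomputable def nsq {n : Type*} [Fintype n] (φ : n → ℂ) : ℝ := ∑ x, ‖φ x‖ ^ 2

lemma nsq_nonneg {n : Type*} [Fintype n] (φ : n → ℂ) : 0 ≤ nsq φ :=
  Finset.sum_nonneg fun _ _ => by positivity

lemma nsq_eq_zero {n : Type*} [Fintype n] {φ : n → ℂ} (h : nsq φ = 0) : φ = 0 := by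
  funext x
  have := (Finset.sum_eq_zero_iff_of_nonneg (fun i _ => by positivity)).mp h x (Finset.mem_univ x)
  simpa using this

lemma energyR_add {n : Type*} [Fintype n] (A B : Matrix n n ℂ) (φ : n → ℂ) :
    energyR (A + B) φ = energyR A φ + energyR B φ := by
  simp [energyR, Matrix.add_mulVec, dotProduct_add]

lemma energyR_sub {n : Type*} [Fintype n] (A B : Matrix n n ℂ) (φ : n → ℂ) :
    energyR (A - B) φ = energyR A φ - energyR B φ := by
  simp [energyR, Matrix.sub_mulVec, dotProduct_sub]

lemma energyR_zero {n : Type*} [Fintype n] (φ : n → ℂ) : energyR (0 : Matrix n n ℂ) φ = 0 := by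
  simp [energyR]

lemma energyR_sum {n : Type*} [Fintype n] {ι : Type*} (s : Finset ι) (A : ι → Matrix n n ℂ)
    (φ : n → ℂ) : energyR (∑ i ∈ s, A i) φ = ∑ i ∈ s, energyR (A i) φ := by
  classical
  induction s using Finset.induction with
  | empty => simp [energyR_zero]
  | @insert a s h ih => rw [Finset.sum_insert h, energyR_add, ih, Finset.sum_insert h]

lemma energyR_one {n : Type*} [Fintype n] [DecidableEq n] (φ : n → ℂ) :
    energyR (1 : Matrix n n ℂ) φ = nsq φ := by
  simp only [energyR, Matrix.one_mulVec, dotProduct, Pi.star_apply, nsq]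
  rw [Complex.re_sum]
  congr 1; funext x
  rw [Complex.star_def, ← Complex.normSq_eq_conj_mul_self]
  simp [Complex.normSq_eq_norm_sq, ← Complex.ofReal_pow]

lemma energyR_smul {n : Type*} [Fintype n] (A : Matrix n n ℂ) (c : ℂ) (φ : n → ℂ) :
    energyR A (c • φ) = ‖c‖ ^ 2 * energyR A φ := by
  have key : star (c • φ) ⬝ᵥ A.mulVec (c • φ)
      = (Complex.normSq c : ℂ) * (star φ ⬝ᵥ A.mulVec φ) := by
    rw [Matrix.mulVec_smul, star_smul, smul_dotProduct, dotProduct_smul]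
    rw [smul_eq_mul, smul_eq_mul, ← mul_assoc]
    congr 1
    rw [Complex.star_def, ← Complex.normSq_eq_conj_mul_self]
  rw [energyR, key, Complex.mul_re]
  simp only [Complex.ofReal_re, Complex.ofReal_im, zero_mul, sub_zero]
  rw [Complex.normSq_eq_norm_sq]
  simp [energyR]

lemma nsq_smul {n : Type*} [Fintype n] (c : ℂ) (φ : n → ℂ) :
    nsq (c • φ) = ‖c‖ ^ 2 * nsq φ := by
  simp [nsq, Finset.mul_sum, mul_pow, norm_mul]

-- quadratic form bound via operator norm
lemma energyR_le_opNorm {n : Type*} [Fintype n] [DecidableEq n] (A : Matrix n n ℂ) (φ : n → ℂ) :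
    energyR A φ ≤ opNorm A * nsq φ := by
  classical
  set x : EuclideanSpace ℂ n := (WithLp.equiv 2 (n → ℂ)).symm φ with hx
  have hinner : (inner ℂ x ((Matrix.toEuclideanCLM (𝕜 := ℂ) A) x) : ℂ)
      = star φ ⬝ᵥ A.mulVec φ := by
    rw [EuclideanSpace.inner_eq_star_dotProduct, dotProduct_comm]
    simp [hx, Matrix.toEuclideanCLM_toLp]
  have hre : energyR A φ = (inner ℂ x ((Matrix.toEuclideanCLM (𝕜 := ℂ) A) x) : ℂ).re := by
    rw [hinner]; rfl
  have hb : ‖(inner ℂ x ((Matrix.toEuclideanCLM (𝕜 := ℂ) A) x) : ℂ)‖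
      ≤ opNorm A * ‖x‖ ^ 2 := by
    calc ‖(inner ℂ x ((Matrix.toEuclideanCLM (𝕜 := ℂ) A) x) : ℂ)‖
        ≤ ‖x‖ * ‖(Matrix.toEuclideanCLM (𝕜 := ℂ) A) x‖ := norm_inner_le_norm _ _
      _ ≤ ‖x‖ * (opNorm A * ‖x‖) := by
          gcongr; exact ContinuousLinearMap.le_opNorm _ _
      _ = opNorm A * ‖x‖ ^ 2 := by ring
  have hxn : ‖x‖ ^ 2 = nsq φ := by
    rw [EuclideanSpace.norm_eq]
    rw [Real.sq_sqrt (Finset.sum_nonneg fun _ _ => by positivity)]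
    rfl
  calc energyR A φ = (inner ℂ x ((Matrix.toEuclideanCLM (𝕜 := ℂ) A) x) : ℂ).re := hre
    _ ≤ ‖(inner ℂ x ((Matrix.toEuclideanCLM (𝕜 := ℂ) A) x) : ℂ)‖ := Complex.re_le_norm _
    _ ≤ opNorm A * ‖x‖ ^ 2 := hb
    _ = opNorm A * nsq φ := by rw [hxn]

section Split
variable {d : ℕ}

def splitEquiv (d N K t : ℕ) (h : t + K ≤ N) :
    (Fin N → Fin d) ≃ ((Fin K → Fin d) × ({j : Fin N // j.val < t ∨ t + K ≤ j.val} → Fin d)) where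
  toFun x := (fun i => x ⟨t + i.val, by have := i.isLt; omega⟩, fun j => x j.val)
  invFun uz j :=
    if hj : t ≤ j.val ∧ j.val < t + K then uz.1 ⟨j.val - t, by omega⟩
    else uz.2 ⟨j, by omega⟩
  left_inv x := by
    funext j
    by_cases hj : t ≤ j.val ∧ j.val < t + K
    · simp only [dif_pos hj]
      congr 1
      exact Fin.ext (by simp; omega)
    · simp only [dif_neg hj]
  right_inv uz := by
    obtain ⟨u, z⟩ := uz
    refine Prod.ext ?_ ?_
    · funext i
      have hj : t ≤ t + i.val ∧ t + i.val < t + K := ⟨by omega, by have := i.isLt; omega⟩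
      simp only [dif_pos hj]
      congr 1
      exact Fin.ext (by simp)
    · funext j
      have hj : ¬ (t ≤ (j.val : Fin N).val ∧ (j.val : Fin N).val < t + K) := by
        have := j.property; omega
      simp only [dif_neg hj]

lemma splitEquiv_symm_block {N K t : ℕ} (h : t + K ≤ N) (u : Fin K → Fin d)
    (z : {j : Fin N // j.val < t ∨ t + K ≤ j.val} → Fin d) {i' : ℕ} (hi' : i' < K)
    (hN : t + i' < N) :
    (splitEquiv d N K t h).symm (u, z) ⟨t + i', hN⟩ = u ⟨i', hi'⟩ := by
  show (if hj : t ≤ t + i' ∧ t + i' < t + K then _ else _) = _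
  rw [dif_pos ⟨by omega, by omega⟩]
  congr 1
  exact Fin.ext (by simp)

lemma splitEquiv_symm_out {N K t : ℕ} (h : t + K ≤ N) (u : Fin K → Fin d)
    (z : {j : Fin N // j.val < t ∨ t + K ≤ j.val} → Fin d) (j : Fin N)
    (hj : j.val < t ∨ t + K ≤ j.val) :
    (splitEquiv d N K t h).symm (u, z) j = z ⟨j, hj⟩ := by
  show (if hj : t ≤ j.val ∧ j.val < t + K then _ else _) = _
  rw [dif_neg (by omega)]

set_option maxHeartbeats 2000000 in
lemma twoSite_split_entry (p : Matrix (Fin d × Fin d) (Fin d × Fin d) ℂ)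
    {N K t i : ℕ} (h : t + K ≤ N) (hiK : i + 1 < K)
    (u u' : Fin K → Fin d) (z z' : {j : Fin N // j.val < t ∨ t + K ≤ j.val} → Fin d) :
    twoSite N p (t + i) (by omega) ((splitEquiv d N K t h).symm (u, z))
        ((splitEquiv d N K t h).symm (u', z'))
      = if z = z' then twoSite K p i hiK u u' else 0 := by
  set X := (splitEquiv d N K t h).symm (u, z) with hX
  set Y := (splitEquiv d N K t h).symm (u', z') with hY
  have hXb : ∀ (i' : ℕ) (hi' : i' < K) (hN : t + i' < N), X ⟨t + i', hN⟩ = u ⟨i', hi'⟩ :=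
    fun i' hi' hN => splitEquiv_symm_block h u z hi' hN
  have hYb : ∀ (i' : ℕ) (hi' : i' < K) (hN : t + i' < N), Y ⟨t + i', hN⟩ = u' ⟨i', hi'⟩ :=
    fun i' hi' hN => splitEquiv_symm_block h u' z' hi' hN
  have hXo : ∀ (j : Fin N) (hj : j.val < t ∨ t + K ≤ j.val), X j = z ⟨j, hj⟩ :=
    fun j hj => splitEquiv_symm_out h u z j hj
  have hYo : ∀ (j : Fin N) (hj : j.val < t ∨ t + K ≤ j.val), Y j = z' ⟨j, hj⟩ :=
    fun j hj => splitEquiv_symm_out h u' z' j hj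
  show Matrix.of _ X Y = _
  simp only [twoSite, Matrix.of_apply]
  by_cases hz : z = z'
  · subst hz
    rw [if_pos rfl]
    by_cases hu : ∀ j : Fin K, j.val ≠ i → j.val ≠ i + 1 → u j = u' j
    · rw [if_pos hu, if_pos]
      · have e1 : X ⟨t + i, by omega⟩ = u ⟨i, by omega⟩ := hXb i (by omega) (by omega)
        have e2 : X ⟨t + i + 1, by omega⟩ = u ⟨i + 1, hiK⟩ := hXb (i+1) hiK (by omega)
        have e3 : Y ⟨t + i, by omega⟩ = u' ⟨i, by omega⟩ := hYb i (by omega) (by omega)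
        have e4 : Y ⟨t + i + 1, by omega⟩ = u' ⟨i + 1, hiK⟩ := hYb (i+1) hiK (by omega)
        rw [e1, e2, e3, e4]
      · intro j hj1 hj2
        by_cases hjb : t ≤ j.val ∧ j.val < t + K
        · have hjeq : j = ⟨t + (j.val - t), by omega⟩ := Fin.ext (by simp; omega)
          rw [hjeq, hXb (j.val - t) (by omega) (by omega), hYb (j.val - t) (by omega) (by omega)]
          exact hu ⟨j.val - t, by omega⟩ (by simp; omega) (by simp; omega)
        · have hout : j.val < t ∨ t + K ≤ j.val := by omega
          rw [hXo j hout, hYo j hout]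
    · rw [if_neg hu, if_neg]
      intro hcond
      apply hu
      intro j' hj1 hj2
      have hc := hcond ⟨t + j'.val, by have := j'.isLt; omega⟩ (by simp; omega) (by simp; omega)
      rwa [hXb j'.val j'.isLt (by have := j'.isLt; omega),
        hYb j'.val j'.isLt (by have := j'.isLt; omega)] at hc
  · rw [if_neg hz, if_neg]
    intro hcond
    apply hz
    funext j
    have hc := hcond j.val (by have := j.property; omega) (by have := j.property; omega)
    rwa [hXo j.val j.property, hYo j.val j.property] at hc
end Split

lemma energyR_split {n₁ n₂ nn : Type*} [Fintype n₁] [Fintype n₂] [DecidableEq n₂] [Fintype nn]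
    (M : Matrix nn nn ℂ) (Mloc : Matrix n₁ n₁ ℂ) (E : nn ≃ n₁ × n₂)
    (hME : ∀ u u' z z', M (E.symm (u, z)) (E.symm (u', z')) = if z = z' then Mloc u u' else 0)
    (φ : nn → ℂ) :
    energyR M φ = ∑ z : n₂, energyR Mloc (fun u => φ (E.symm (u, z))) := by
  classical
  have e2 : ∀ (u : n₁) (z : n₂), (∑ y, M (E.symm (u, z)) y * φ y)
      = ∑ u', Mloc u u' * φ (E.symm (u', z)) := by
    intro u z
    rw [← Equiv.sum_comp E.symm (fun y => M (E.symm (u, z)) y * φ y), Fintype.sum_prod_type]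
    calc ∑ u', ∑ z', M (E.symm (u, z)) (E.symm (u', z')) * φ (E.symm (u', z'))
        = ∑ u', ∑ z', (if z = z' then Mloc u u' * φ (E.symm (u', z')) else 0) := by
          refine Finset.sum_congr rfl fun u' _ => Finset.sum_congr rfl fun z' _ => ?_
          rw [hME]
          split_ifs <;> simp
      _ = ∑ u', Mloc u u' * φ (E.symm (u', z)) := by
          refine Finset.sum_congr rfl fun u' _ => ?_
          rw [Finset.sum_ite_eq]
          simp
  have key : star φ ⬝ᵥ M.mulVec φ
      = ∑ z : n₂, (star (fun u => φ (E.symm (u, z)))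
          ⬝ᵥ Mloc.mulVec (fun u => φ (E.symm (u, z)))) := by
    calc star φ ⬝ᵥ M.mulVec φ = ∑ x, star φ x * ∑ y, M x y * φ y := rfl
      _ = ∑ uz : n₁ × n₂, star φ (E.symm uz) * ∑ y, M (E.symm uz) y * φ y :=
          (Equiv.sum_comp E.symm _).symm
      _ = ∑ u, ∑ z, star φ (E.symm (u, z)) * ∑ y, M (E.symm (u, z)) y * φ y :=
          Fintype.sum_prod_type _
      _ = ∑ u, ∑ z, star φ (E.symm (u, z)) * ∑ u', Mloc u u' * φ (E.symm (u', z)) := by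
          refine Finset.sum_congr rfl fun u _ => Finset.sum_congr rfl fun z _ => ?_
          rw [e2]
      _ = ∑ z, ∑ u, star φ (E.symm (u, z)) * ∑ u', Mloc u u' * φ (E.symm (u', z)) :=
          Finset.sum_comm
      _ = ∑ z : n₂, (star (fun u => φ (E.symm (u, z)))
          ⬝ᵥ Mloc.mulVec (fun u => φ (E.symm (u, z)))) := rfl
  rw [energyR, key, Complex.re_sum]
  rfl

lemma nsq_split {n₁ n₂ nn : Type*} [Fintype n₁] [Fintype n₂] [Fintype nn]
    (E : nn ≃ n₁ × n₂) (φ : nn → ℂ) :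
    nsq φ = ∑ z : n₂, nsq (fun u => φ (E.symm (u, z))) := by
  calc nsq φ = ∑ x, ‖φ x‖ ^ 2 := rfl
    _ = ∑ uz : n₁ × n₂, ‖φ (E.symm uz)‖ ^ 2 := (Equiv.sum_comp E.symm _).symm
    _ = ∑ u, ∑ z, ‖φ (E.symm (u, z))‖ ^ 2 := Fintype.sum_prod_type _
    _ = ∑ z, ∑ u, ‖φ (E.symm (u, z))‖ ^ 2 := Finset.sum_comm
    _ = ∑ z : n₂, nsq (fun u => φ (E.symm (u, z))) := rfl

section Bond
variable {d : ℕ} (p : Matrix (Fin d × Fin d) (Fin d × Fin d) ℂ)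

/-- Total bond-energy function. -/
noncomputable def bondE (N : ℕ) (φ : (Fin N → Fin d) → ℂ) (i : ℕ) : ℝ :=
  if hi : i + 1 < N then energyR (twoSite N p i hi) φ else 0

lemma chainH_energy (K : ℕ) (φ : (Fin K → Fin d) → ℂ) :
    energyR (chainH K p) φ = ∑ i ∈ Finset.range (K - 1), bondE p K φ i := by
  rw [chainH, energyR_sum, ← Fin.sum_univ_eq_sum_range (fun i => bondE p K φ i) (K - 1)]
  refine Finset.sum_congr rfl fun i _ => ?_
  rw [bondE, dif_pos (by have := i.isLt; omega : i.val + 1 < K)]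

lemma window_sum_split (N n t : ℕ) (htn : t + n + 1 ≤ N) (φ : (Fin N → Fin d) → ℂ) :
    ∑ i ∈ Finset.Ico t (t + n), bondE p N φ i
      = ∑ z, energyR (chainH (n + 1) p)
          (fun u => φ ((splitEquiv d N (n + 1) t (by omega)).symm (u, z))) := by
  have hsub : t + (n + 1) ≤ N := by omega
  rw [Finset.sum_Ico_eq_sum_range]
  have hn : t + n - t = n := by omega
  rw [hn]
  have step : ∀ i ∈ Finset.range n,
      bondE p N φ (t + i)
        = ∑ z, bondE p (n + 1)
            (fun u => φ ((splitEquiv d N (n + 1) t hsub).symm (u, z))) i := by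
    intro i hi
    have hi' : i < n := Finset.mem_range.mp hi
    rw [bondE, dif_pos (by omega : t + i + 1 < N)]
    rw [energyR_split _ (twoSite (n + 1) p i (by omega)) (splitEquiv d N (n + 1) t hsub)
      (fun u u' z z' => twoSite_split_entry p hsub (by omega) u u' z z') φ]
    refine Finset.sum_congr rfl fun z _ => ?_
    rw [bondE, dif_pos (by omega : i + 1 < n + 1)]
  rw [Finset.sum_congr rfl step, Finset.sum_comm]
  refine Finset.sum_congr rfl fun z _ => ?_
  rw [chainH_energy]
  rfl

lemma nsq_window_split (N n t : ℕ) (htn : t + n + 1 ≤ N) (φ : (Fin N → Fin d) → ℂ) :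
    nsq φ = ∑ z, nsq
        (fun u => φ ((splitEquiv d N (n + 1) t (by omega)).symm (u, z))) :=
  nsq_split (splitEquiv d N (n + 1) t (by omega)) φ

end Bond

section Pair
variable {d : ℕ}

lemma twoSite_two (p : Matrix (Fin d × Fin d) (Fin d × Fin d) ℂ) (pf : 0 + 1 < 2)
    (u u' : Fin 2 → Fin d) :
    twoSite 2 p 0 pf u u' = p (u 0, u 1) (u' 0, u' 1) := by
  simp only [twoSite, Matrix.of_apply]
  rw [if_pos]
  · rfl
  · intro j h0 h1
    exact absurd j.isLt (by omega)

lemma bond_pair_split (p : Matrix (Fin d × Fin d) (Fin d × Fin d) ℂ) (N t : ℕ)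
    (ht : t + 1 < N) (φ : (Fin N → Fin d) → ℂ) :
    ∃ (ι : Type) (_ : Fintype ι) (w : ι → (Fin d × Fin d) → ℂ),
      (∀ q : Matrix (Fin d × Fin d) (Fin d × Fin d) ℂ,
        bondE q N φ t = ∑ z, energyR q (w z)) ∧ nsq φ = ∑ z, nsq (w z) := by
  have hsub : t + 2 ≤ N := by omega
  set pe := piFinTwoEquiv (fun _ : Fin 2 => Fin d) with hpe
  set E : (Fin N → Fin d) ≃ ((Fin d × Fin d) × ({j : Fin N // j.val < t ∨ t + 2 ≤ j.val} → Fin d)) :=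
    (splitEquiv d N 2 t hsub).trans (Equiv.prodCongr pe (Equiv.refl _)) with hE
  refine ⟨_, inferInstance, fun z c => φ (E.symm (c, z)), fun q => ?_, nsq_split E φ⟩
  rw [bondE, dif_pos ht]
  refine energyR_split _ q E ?_ φ
  intro u u' z z'
  have hsymm : ∀ (c : Fin d × Fin d) (z : {j : Fin N // j.val < t ∨ t + 2 ≤ j.val} → Fin d),
      E.symm (c, z) = (splitEquiv d N 2 t hsub).symm (pe.symm c, z) := by
    intro c z
    simp [hE, Equiv.symm_trans_apply]
  rw [hsymm, hsymm]
  have key := twoSite_split_entry (t := t) (i := 0) q hsub (by omega) (pe.symm u) (pe.symm u') z z'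
  refine Eq.trans key ?_
  split_ifs with hzz
  · rw [twoSite_two]
    have h1 : ((pe.symm u) 0, (pe.symm u) 1) = u := by
      show pe (pe.symm u) = u
      exact Equiv.apply_symm_apply _ _
    have h2 : ((pe.symm u') 0, (pe.symm u') 1) = u' := by
      show pe (pe.symm u') = u'
      exact Equiv.apply_symm_apply _ _
    rw [h1, h2]
  · rfl

lemma bondE_nonneg (q : Matrix (Fin d × Fin d) (Fin d × Fin d) ℂ)
    (hq0 : ∀ v : Fin d × Fin d → ℂ, 0 ≤ energyR q v) (N : ℕ)
    (φ : (Fin N → Fin d) → ℂ) (i : ℕ) : 0 ≤ bondE q N φ i := by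
  by_cases hi : i + 1 < N
  · obtain ⟨ι, _, w, hw, -⟩ := bond_pair_split q N i hi φ
    rw [hw q]
    exact Finset.sum_nonneg fun z _ => hq0 _
  · rw [bondE, dif_neg hi]

lemma bondE_le (q : Matrix (Fin d × Fin d) (Fin d × Fin d) ℂ)
    (hq2 : ∀ v : Fin d × Fin d → ℂ, energyR q v ≤ 2 * nsq v) (N : ℕ)
    (φ : (Fin N → Fin d) → ℂ) (i : ℕ) : bondE q N φ i ≤ 2 * nsq φ := by
  by_cases hi : i + 1 < N
  · obtain ⟨ι, _, w, hw, hn⟩ := bond_pair_split q N i hi φ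
    rw [hw q, hn, Finset.mul_sum]
    exact Finset.sum_le_sum fun z _ => hq2 _
  · rw [bondE, dif_neg hi]
    have := nsq_nonneg φ
    linarith

section Ground
variable {d : ℕ} (p : Matrix (Fin d × Fin d) (Fin d × Fin d) ℂ)

/-- Energies of normalized states on a chain of `n+1` sites (`n` bonds). -/
def ES (n : ℕ) : Set ℝ :=
  {r | ∃ u : (Fin (n + 1) → Fin d) → ℂ, nsq u = 1 ∧ r = energyR (chainH (n + 1) p) u}

noncomputable def gE (n : ℕ) : ℝ := sSup (ES p n)

lemma exists_norm_one (hd : 0 < d) (K : ℕ) : ∃ u : (Fin K → Fin d) → ℂ, nsq u = 1 := by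
  classical
  refine ⟨fun w => if w = (fun _ => ⟨0, hd⟩) then 1 else 0, ?_⟩
  rw [nsq]
  rw [Finset.sum_eq_single (fun _ => ⟨0, hd⟩)]
  · simp
  · intro w _ hw
    simp [hw]
  · intro hmem
    exact absurd (Finset.mem_univ _) hmem

lemma ES_nonempty (hd : 0 < d) (n : ℕ) : (ES p n).Nonempty := by
  obtain ⟨u, hu⟩ := exists_norm_one hd (n + 1)
  exact ⟨_, u, hu, rfl⟩

lemma ES_bdd (hp2 : ∀ v : Fin d × Fin d → ℂ, energyR p v ≤ 2 * nsq v) (n : ℕ) :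
    BddAbove (ES p n) := by
  refine ⟨2 * n, fun r hr => ?_⟩
  obtain ⟨u, hu, rfl⟩ := hr
  rw [chainH_energy]
  calc ∑ i ∈ Finset.range (n + 1 - 1), bondE p (n + 1) u i
      ≤ ∑ _i ∈ Finset.range (n + 1 - 1), (2 : ℝ) := by
        refine Finset.sum_le_sum fun i _ => ?_
        have := bondE_le p hp2 (n + 1) u i
        rw [hu] at this
        linarith
    _ = 2 * n := by simp [mul_comm]

lemma energy_le_gE (hd : 0 < d)
    (hp2 : ∀ v : Fin d × Fin d → ℂ, energyR p v ≤ 2 * nsq v) (n : ℕ)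
    (φ : (Fin (n + 1) → Fin d) → ℂ) :
    energyR (chainH (n + 1) p) φ ≤ gE p n * nsq φ := by
  rcases eq_or_ne (nsq φ) 0 with h0 | h0
  · have hφ : φ = 0 := nsq_eq_zero h0
    subst hφ
    have : energyR (chainH (n + 1) p) (0 : (Fin (n + 1) → Fin d) → ℂ) = 0 := by
      simp [energyR]
    rw [this, h0, mul_zero]
  · set c : ℝ := Real.sqrt (nsq φ) with hc
    have hcpos : 0 < c := Real.sqrt_pos.mpr (lt_of_le_of_ne (nsq_nonneg φ) (Ne.symm h0))
    have hc2 : c ^ 2 = nsq φ := Real.sq_sqrt (nsq_nonneg φ)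
    set u : (Fin (n + 1) → Fin d) → ℂ := ((c : ℂ))⁻¹ • φ with hu
    have hcne : (c : ℂ) ≠ 0 := by
      simp only [ne_eq, Complex.ofReal_eq_zero]
      exact ne_of_gt hcpos
    have hφu : φ = (c : ℂ) • u := by
      rw [hu, smul_inv_smul₀ hcne]
    have hnu : nsq u = 1 := by
      rw [hu, nsq_smul]
      rw [norm_inv, Complex.norm_real, Real.norm_eq_abs, abs_of_pos hcpos]
      field_simp
      rw [hc2]
    have hmem : energyR (chainH (n + 1) p) u ∈ ES p n := ⟨u, hnu, rfl⟩
    have hle : energyR (chainH (n + 1) p) u ≤ gE p n := le_csSup (ES_bdd p hp2 n) hmem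
    calc energyR (chainH (n + 1) p) φ
        = ‖(c : ℂ)‖ ^ 2 * energyR (chainH (n + 1) p) u := by rw [hφu, energyR_smul]
      _ = c ^ 2 * energyR (chainH (n + 1) p) u := by
          rw [Complex.norm_real, Real.norm_eq_abs, abs_of_pos hcpos]
      _ ≤ c ^ 2 * gE p n := by
          apply mul_le_mul_of_nonneg_left hle
          positivity
      _ = gE p n * nsq φ := by rw [← hc2]; ring

lemma window_le (hd : 0 < d)
    (hp2 : ∀ v : Fin d × Fin d → ℂ, energyR p v ≤ 2 * nsq v)
    (N n t : ℕ) (htn : t + n + 1 ≤ N) (φ : (Fin N → Fin d) → ℂ) :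
    ∑ i ∈ Finset.Ico t (t + n), bondE p N φ i ≤ gE p n * nsq φ := by
  rw [window_sum_split p N n t htn φ, nsq_window_split (d := d) N n t htn φ, Finset.mul_sum]
  exact Finset.sum_le_sum fun z _ => energy_le_gE p hd hp2 n _

lemma gE_nonneg (hd : 0 < d)
    (hp0 : ∀ v : Fin d × Fin d → ℂ, 0 ≤ energyR p v)
    (hp2 : ∀ v : Fin d × Fin d → ℂ, energyR p v ≤ 2 * nsq v) (n : ℕ) :
    0 ≤ gE p n := by
  obtain ⟨u, hu⟩ := exists_norm_one hd (n + 1)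
  have hmem : energyR (chainH (n + 1) p) u ∈ ES p n := ⟨u, hu, rfl⟩
  have h1 : 0 ≤ energyR (chainH (n + 1) p) u := by
    rw [chainH_energy]
    exact Finset.sum_nonneg fun i _ => bondE_nonneg p hp0 (n + 1) u i
  exact le_trans h1 (le_csSup (ES_bdd p hp2 n) hmem)

lemma gE_subadd (hd : 0 < d)
    (hp2 : ∀ v : Fin d × Fin d → ℂ, energyR p v ≤ 2 * nsq v) (x y : ℕ) :
    gE p (x + y) ≤ gE p x + gE p y := by
  refine csSup_le (ES_nonempty p hd _) fun r hr => ?_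
  obtain ⟨u, hu, rfl⟩ := hr
  rw [chainH_energy]
  have hsplit : ∑ i ∈ Finset.range (x + y + 1 - 1), bondE p (x + y + 1) u i
      = (∑ i ∈ Finset.Ico 0 (0 + x), bondE p (x + y + 1) u i)
        + ∑ i ∈ Finset.Ico x (x + y), bondE p (x + y + 1) u i := by
    rw [Finset.range_eq_Ico, zero_add]
    exact (Finset.sum_Ico_consecutive _ (by omega) (by omega)).symm
  rw [hsplit]
  have h1 := window_le p hd hp2 (x + y + 1) x 0 (by omega) u
  have h2 := window_le p hd hp2 (x + y + 1) y x (by omega) u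
  rw [hu, mul_one] at h1 h2
  exact add_le_add h1 h2
end Ground

section Super
variable {d : ℕ} (p : Matrix (Fin d × Fin d) (Fin d × Fin d) ℂ)

lemma gE_superadd_core (hd : 0 < d)
    (hp0 : ∀ v : Fin d × Fin d → ℂ, 0 ≤ energyR p v)
    (hp2 : ∀ v : Fin d × Fin d → ℂ, energyR p v ≤ 2 * nsq v)
    (x y : ℕ) (u : (Fin (x + 1) → Fin d) → ℂ) (hu : nsq u = 1)
    (v : (Fin (y + 1) → Fin d) → ℂ) (hv : nsq v = 1) :
    energyR (chainH (x + 1) p) u + energyR (chainH (y + 1) p) v ≤ gE p (x + y + 1) := by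
  classical
  set K' : ℕ := x + y + 2 with hK'
  have hE1p : 0 + (x + 1) ≤ K' := by omega
  have hE2p : (x + 1) + (y + 1) ≤ K' := by omega
  set E1 := splitEquiv d K' (x + 1) 0 hE1p with hE1
  set E2 := splitEquiv d K' (y + 1) (x + 1) hE2p with hE2
  -- index equivalences for the out-regions
  set eI1 : Fin (y + 1) → {j : Fin K' // j.val < 0 ∨ 0 + (x + 1) ≤ j.val} :=
    fun i => ⟨⟨x + 1 + i.val, by have := i.isLt; omega⟩, Or.inr (by simp)⟩ with heI1
  set eI2 : Fin (x + 1) → {j : Fin K' // j.val < x + 1 ∨ (x + 1) + (y + 1) ≤ j.val} :=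
    fun i => ⟨⟨i.val, by have := i.isLt; omega⟩, Or.inl (by have := i.isLt; simp; omega)⟩ with heI2
  set vt : ({j : Fin K' // j.val < 0 ∨ 0 + (x + 1) ≤ j.val} → Fin d) → ℂ :=
    fun z => v (fun i => z (eI1 i)) with hvt
  set ut : ({j : Fin K' // j.val < x + 1 ∨ (x + 1) + (y + 1) ≤ j.val} → Fin d) → ℂ :=
    fun z => u (fun i => z (eI2 i)) with hut
  set ψ : (Fin K' → Fin d) → ℂ := fun w => u ((E1 w).1) * vt ((E1 w).2) with hψ
  -- evaluation under E1.symm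
  have heval1 : ∀ u' z, ψ (E1.symm (u', z)) = vt z * u u' := by
    intro u' z
    rw [hψ]
    simp only [Equiv.apply_symm_apply]
    ring
  have hψz1 : ∀ z, (fun u' => ψ (E1.symm (u', z))) = vt z • u := by
    intro z
    funext u'
    rw [heval1]
    simp [smul_eq_mul]
  -- evaluation under E2.symm
  have heval2 : ∀ v' z, ψ (E2.symm (v', z)) = ut z * v v' := by
    intro v' z
    have hblk : (E1 (E2.symm (v', z))).1 = fun i => z (eI2 i) := by
      funext i
      show E2.symm (v', z) ⟨0 + i.val, by have := i.isLt; omega⟩ = z (eI2 i)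
      have hidx : (⟨0 + i.val, by have := i.isLt; omega⟩ : Fin K')
          = ⟨i.val, by have := i.isLt; omega⟩ := Fin.ext (by simp)
      rw [hidx]
      exact splitEquiv_symm_out hE2p v' z _ (Or.inl (by simpa using i.isLt))
    have hout : vt ((E1 (E2.symm (v', z))).2) = v v' := by
      have hcrd : (fun i => (E1 (E2.symm (v', z))).2 (eI1 i)) = v' := by
        funext i
        show E2.symm (v', z) ⟨x + 1 + i.val, by have := i.isLt; omega⟩ = v' i
        have hidx : (⟨x + 1 + i.val, by have := i.isLt; omega⟩ : Fin K')
            = ⟨(x + 1) + i.val, by have := i.isLt; omega⟩ := rfl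
        rw [hidx, splitEquiv_symm_block hE2p v' z i.isLt]
      show v (fun i => (E1 (E2.symm (v', z))).2 (eI1 i)) = v v'
      rw [hcrd]
    show u ((E1 (E2.symm (v', z))).1) * vt ((E1 (E2.symm (v', z))).2) = ut z * v v'
    rw [hblk, hout]
  have hψz2 : ∀ z, (fun v' => ψ (E2.symm (v', z))) = ut z • v := by
    intro z
    funext v'
    rw [heval2]
    simp [smul_eq_mul]
  -- sums of the coefficient norms
  have hsumvt : ∑ z, ‖vt z‖ ^ 2 = nsq v := by
    let eIdx : Fin (y + 1) ≃ {j : Fin K' // j.val < 0 ∨ 0 + (x + 1) ≤ j.val} :=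
      { toFun := eI1
        invFun := fun j => ⟨j.val.val - (x + 1), by
          have := j.property; have := j.val.isLt; omega⟩
        left_inv := fun i => Fin.ext (by simp [heI1])
        right_inv := fun j => Subtype.ext (Fin.ext (by
          have := j.property; simp [heI1]; omega)) }
    let eConf : (Fin (y + 1) → Fin d) ≃ ({j : Fin K' // j.val < 0 ∨ 0 + (x + 1) ≤ j.val} → Fin d) :=
      { toFun := fun w j => w (eIdx.symm j)
        invFun := fun z i => z (eIdx i)
        left_inv := fun w => by funext i; simp
        right_inv := fun z => by funext j; simp }
    rw [← Equiv.sum_comp eConf (fun z => ‖vt z‖ ^ 2)]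
    rw [nsq]
    refine Finset.sum_congr rfl fun w _ => ?_
    have hvw : vt (eConf w) = v w := by
      show v (fun i => (eConf w) (eI1 i)) = v w
      congr 1
      funext i
      show w (eIdx.symm (eIdx i)) = w i
      rw [Equiv.symm_apply_apply]
    rw [hvw]
  have hsumut : ∑ z, ‖ut z‖ ^ 2 = nsq u := by
    let eIdx : Fin (x + 1) ≃ {j : Fin K' // j.val < x + 1 ∨ (x + 1) + (y + 1) ≤ j.val} :=
      { toFun := eI2
        invFun := fun j => ⟨j.val.val, by
          have := j.property; have := j.val.isLt; omega⟩
        left_inv := fun i => Fin.ext (by simp [heI2])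
        right_inv := fun j => Subtype.ext (Fin.ext (by
          have := j.property; simp [heI2])) }
    let eConf : (Fin (x + 1) → Fin d) ≃ ({j : Fin K' // j.val < x + 1 ∨ (x + 1) + (y + 1) ≤ j.val} → Fin d) :=
      { toFun := fun w j => w (eIdx.symm j)
        invFun := fun z i => z (eIdx i)
        left_inv := fun w => by funext i; simp
        right_inv := fun z => by funext j; simp }
    rw [← Equiv.sum_comp eConf (fun z => ‖ut z‖ ^ 2)]
    rw [nsq]
    refine Finset.sum_congr rfl fun w _ => ?_
    have huw : ut (eConf w) = u w := by
      show u (fun i => (eConf w) (eI2 i)) = u w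
      congr 1
    rw [huw]
  -- normalization of ψ
  have hnψ : nsq ψ = 1 := by
    rw [nsq_split E1 ψ]
    have : ∀ z, nsq (fun u' => ψ (E1.symm (u', z))) = ‖vt z‖ ^ 2 * nsq u := by
      intro z
      rw [hψz1 z, nsq_smul]
    rw [Finset.sum_congr rfl fun z _ => this z, ← Finset.sum_mul, hsumvt, hv, hu, one_mul]
  -- window energies
  have hw1 : ∑ i ∈ Finset.Ico 0 (0 + x), bondE p K' ψ i = energyR (chainH (x + 1) p) u := by
    rw [window_sum_split p K' x 0 (by omega) ψ]
    have : ∀ z, energyR (chainH (x + 1) p) (fun u' => ψ ((splitEquiv d K' (x + 1) 0 (by omega)).symm (u', z)))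
        = ‖vt z‖ ^ 2 * energyR (chainH (x + 1) p) u := by
      intro z
      rw [show (fun u' => ψ ((splitEquiv d K' (x + 1) 0 (by omega)).symm (u', z))) = vt z • u from hψz1 z,
        energyR_smul]
    rw [Finset.sum_congr rfl fun z _ => this z, ← Finset.sum_mul, hsumvt, hv, one_mul]
  have hw2 : ∑ i ∈ Finset.Ico (x + 1) ((x + 1) + y), bondE p K' ψ i
      = energyR (chainH (y + 1) p) v := by
    rw [window_sum_split p K' y (x + 1) (by omega) ψ]
    have : ∀ z, energyR (chainH (y + 1) p) (fun v' => ψ ((splitEquiv d K' (y + 1) (x + 1) (by omega)).symm (v', z)))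
        = ‖ut z‖ ^ 2 * energyR (chainH (y + 1) p) v := by
      intro z
      rw [show (fun v' => ψ ((splitEquiv d K' (y + 1) (x + 1) (by omega)).symm (v', z))) = ut z • v from hψz2 z,
        energyR_smul]
    rw [Finset.sum_congr rfl fun z _ => this z, ← Finset.sum_mul, hsumut, hu, one_mul]
  -- assemble
  have hmem : energyR (chainH ((x + y + 1) + 1) p) ψ ∈ ES p (x + y + 1) := ⟨ψ, hnψ, rfl⟩
  have hle : energyR (chainH ((x + y + 1) + 1) p) ψ ≤ gE p (x + y + 1) :=
    le_csSup (ES_bdd p hp2 _) hmem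
  refine le_trans ?_ hle
  have htot : energyR (chainH ((x + y + 1) + 1) p) ψ
      = (∑ i ∈ Finset.Ico 0 (0 + x), bondE p K' ψ i)
        + bondE p K' ψ x
        + ∑ i ∈ Finset.Ico (x + 1) ((x + 1) + y), bondE p K' ψ i := by
    rw [chainH_energy]
    have h1 : Finset.range ((x + y + 1) + 1 - 1) = Finset.Ico 0 (x + y + 1) := by
      rw [Finset.range_eq_Ico]
      norm_num
    rw [h1]
    rw [← Finset.sum_Ico_consecutive (fun i => bondE p K' ψ i) (by omega : 0 ≤ x) (by omega : x ≤ x + y + 1)]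
    rw [← Finset.sum_Ico_consecutive (fun i => bondE p K' ψ i) (by omega : x ≤ x + 1) (by omega : x + 1 ≤ x + y + 1)]
    have h2 : ∑ i ∈ Finset.Ico x (x + 1), bondE p K' ψ i = bondE p K' ψ x := by
      rw [Finset.sum_Ico_eq_sum_range]
      simp
    have h3 : Finset.Ico 0 x = Finset.Ico 0 (0 + x) := by rw [zero_add]
    have h4 : Finset.Ico (x + 1) (x + y + 1) = Finset.Ico (x + 1) ((x + 1) + y) := by
      congr 1
      omega
    rw [h2, h3, h4]
    ring
  rw [htot, hw1, hw2]
  have hb : 0 ≤ bondE p K' ψ x := bondE_nonneg p hp0 K' ψ x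
  linarith

lemma gE_superadd (hd : 0 < d)
    (hp0 : ∀ v : Fin d × Fin d → ℂ, 0 ≤ energyR p v)
    (hp2 : ∀ v : Fin d × Fin d → ℂ, energyR p v ≤ 2 * nsq v)
    (x y : ℕ) : gE p x + gE p y ≤ gE p (x + y + 1) := by
  have key : ∀ r ∈ ES p x, ∀ s ∈ ES p y, r + s ≤ gE p (x + y + 1) := by
    rintro r ⟨u, hu, rfl⟩ s ⟨v, hv, rfl⟩
    exact gE_superadd_core p hd hp0 hp2 x y u hu v hv
  have h1 : gE p x ≤ gE p (x + y + 1) - gE p y := by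
    refine csSup_le (ES_nonempty p hd x) fun r hr => ?_
    have h2 : gE p y ≤ gE p (x + y + 1) - r :=
      csSup_le (ES_nonempty p hd y) fun s hs => by linarith [key r hr s hs]
    linarith
  linarith
end Super

/-- Master abstract inequality: for nonnegative `f` with `f 0 = 0`, subadditive and
superadditive-with-gap, `b * f a ≤ (a+1) * f b`. -/
lemma master_ineq (f : ℕ → ℝ) (h0 : f 0 = 0) (hnn : ∀ n, 0 ≤ f n)
    (hsub : ∀ x y, f (x + y) ≤ f x + f y)
    (hsup : ∀ x y, f x + f y ≤ f (x + y + 1)) :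
    ∀ a b : ℕ, (b : ℝ) * f a ≤ ((a : ℝ) + 1) * f b := by
  have main : ∀ s a b : ℕ, a + b ≤ s → (b : ℝ) * f a ≤ ((a : ℝ) + 1) * f b := by
    intro s
    induction s with
    | zero =>
      intro a b hab
      have ha : a = 0 := by omega
      have hb : b = 0 := by omega
      subst ha; subst hb
      simp [h0]
    | succ s ih =>
      intro a b hab
      rcases Nat.eq_zero_or_pos b with hb0 | hb0
      · subst hb0
        simp [h0, hnn a]
      rcases Nat.eq_zero_or_pos a with ha0 | ha0
      · subst ha0
        simp only [Nat.cast_zero, zero_add, one_mul, h0, mul_zero]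
        exact hnn b
      rcases lt_trichotomy a b with hlt | heq | hgt
      · -- b > a : superadditivity
        have hsplit : f a + f (b - a - 1) ≤ f b := by
          have := hsup a (b - a - 1)
          have he : a + (b - a - 1) + 1 = b := by omega
          rwa [he] at this
        have hih := ih a (b - a - 1) (by omega)
        have hcast : ((b - a - 1 : ℕ) : ℝ) = (b : ℝ) - a - 1 := by
          rw [Nat.cast_sub (by omega : 1 ≤ b - a), Nat.cast_sub (by omega : a ≤ b)]
          push_cast
          ring
        rw [hcast] at hih
        have ha1 : (0 : ℝ) ≤ (a : ℝ) + 1 := by positivity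
        have hfa := hnn a
        nlinarith [hnn (b - a - 1)]
      · subst heq
        have := hnn a
        have : (a : ℝ) * f a ≤ ((a : ℝ) + 1) * f a := by nlinarith [hnn a]
        exact this
      · -- a > b : subadditivity
        have hsplit : f a ≤ f b + f (a - b) := by
          have := hsub b (a - b)
          have he : b + (a - b) = a := by omega
          rwa [he] at this
        have hih := ih (a - b) b (by omega)
        have hcast : ((a - b : ℕ) : ℝ) = (a : ℝ) - b :=
          Nat.cast_sub (by omega : b ≤ a)
        rw [hcast] at hih
        have hbpos : (0 : ℝ) < b := by exact_mod_cast hb0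
        nlinarith [hnn b, hnn (a - b)]
  intro a b
  exact main (a + b) a b le_rfl

section Alg
variable {d : ℕ}

lemma twoSite_sub (N : ℕ) (A B : Matrix (Fin d × Fin d) (Fin d × Fin d) ℂ) (i : ℕ)
    (hi : i + 1 < N) :
    twoSite N (A - B) i hi = twoSite N A i hi - twoSite N B i hi := by
  ext x y
  simp only [twoSite, Matrix.of_apply, Matrix.sub_apply]
  split_ifs with hc
  · rfl
  · simp

lemma twoSite_one (N : ℕ) (i : ℕ) (hi : i + 1 < N) :
    twoSite N (1 : Matrix (Fin d × Fin d) (Fin d × Fin d) ℂ) i hi = 1 := by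
  ext x y
  simp only [twoSite, Matrix.of_apply]
  by_cases hc : ∀ j : Fin N, j.val ≠ i → j.val ≠ i + 1 → x j = y j
  · rw [if_pos hc]
    by_cases hxy : x = y
    · subst hxy
      rw [Matrix.one_apply_eq, Matrix.one_apply_eq]
    · rw [Matrix.one_apply_ne hxy, Matrix.one_apply_ne]
      intro hpair
      apply hxy
      obtain ⟨h1, h2⟩ := Prod.ext_iff.mp hpair
      funext j
      by_cases hji : j.val = i
      · have : j = ⟨i, by omega⟩ := Fin.ext hji
        rw [this]; exact h1
      · by_cases hji1 : j.val = i + 1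
        · have : j = ⟨i + 1, hi⟩ := Fin.ext hji1
          rw [this]; exact h2
        · exact hc j hji hji1
  · rw [if_neg hc]
    symm
    rw [Matrix.one_apply_ne]
    intro hxy
    subst hxy
    exact hc fun j _ _ => rfl

lemma gE_zero (p : Matrix (Fin d × Fin d) (Fin d × Fin d) ℂ) (hd : 0 < d)
    (hp0 : ∀ v : Fin d × Fin d → ℂ, 0 ≤ energyR p v)
    (hp2 : ∀ v : Fin d × Fin d → ℂ, energyR p v ≤ 2 * nsq v) :
    gE p 0 = 0 := by
  refine le_antisymm ?_ (gE_nonneg p hd hp0 hp2 0)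
  refine csSup_le (ES_nonempty p hd 0) fun r hr => ?_
  obtain ⟨u, hu, rfl⟩ := hr
  have hc : chainH 1 p = (0 : Matrix (Fin 1 → Fin d) (Fin 1 → Fin d) ℂ) := by
    have hie : IsEmpty (Fin (1 - 1)) := by
      constructor; intro i; exact absurd i.isLt (by omega)
    rw [chainH, Finset.univ_eq_empty, Finset.sum_empty]
  rw [hc, energyR_zero]
end Alg

/-- For a translationally invariant nearest-neighbor Hamiltonian with terms of norm at most 1
and ground energy `E₀`, any state `η` and interval `[a, b-1]` of sites satisfy
`⟨η| Σ_{i=a}^{b-2} H_{i,i+1} |η⟩ ≥ ((b-a)/(N-1))·E₀ − 1`. -/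
theorem partial_chain_energy_lower_bound (N d : ℕ) (hN : 2 ≤ N)
    (h : Matrix (Fin d × Fin d) (Fin d × Fin d) ℂ)
    (hherm : h.IsHermitian) (hnorm : opNorm h ≤ 1) (E0 : ℝ)
    (hE0 : IsLeast {r : ℝ | ∃ φ : (Fin N → Fin d) → ℂ,
      (∑ x, ‖φ x‖ ^ 2) = 1 ∧ r = energyR (chainH N h) φ} E0)
    (η : (Fin N → Fin d) → ℂ) (hη : (∑ x, ‖η x‖ ^ 2) = 1)
    (a b : ℕ) (hab : a < b) (hb : b ≤ N) :
    ((b : ℝ) - a) / ((N : ℝ) - 1) * E0 - 1 ≤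
      energyR (∑ i : (Finset.Ico a (b - 1)),
        twoSite N h i.val (by have := (Finset.mem_Ico.mp i.2); omega)) η := by
  classical
  have hd : 0 < d := by
    rcases Nat.eq_zero_or_pos d with h0 | h0
    · exfalso
      subst h0
      have hie : IsEmpty (Fin N → Fin 0) := ⟨fun g => (g ⟨0, by omega⟩).elim0⟩
      rw [Finset.univ_eq_empty, Finset.sum_empty] at hη
      norm_num at hη
    · exact h0
  obtain ⟨M, rfl⟩ : ∃ M, N = M + 1 := ⟨N - 1, by omega⟩
  have hM : 1 ≤ M := by omega
  have hnη : nsq η = 1 := hη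
  set p : Matrix (Fin d × Fin d) (Fin d × Fin d) ℂ := 1 - h with hp
  -- pair-level quadratic bounds
  have hfact : ∀ v : Fin d × Fin d → ℂ, energyR p v = nsq v - energyR h v := by
    intro v
    rw [hp, energyR_sub, energyR_one]
  have hhub : ∀ v : Fin d × Fin d → ℂ, energyR h v ≤ nsq v := by
    intro v
    have h1 := energyR_le_opNorm h v
    have h2 := nsq_nonneg v
    nlinarith
  have hhlb : ∀ v : Fin d × Fin d → ℂ, -nsq v ≤ energyR h v := by
    intro v
    have h1 := energyR_le_opNorm (-h) v
    have hneg : energyR (-h) v = - energyR h v := by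
      have hz : (-h) = (0 : Matrix (Fin d × Fin d) (Fin d × Fin d) ℂ) - h := (zero_sub h).symm
      rw [hz, energyR_sub, energyR_zero, zero_sub]
    have hnn : opNorm (-h) = opNorm h := by
      rw [opNorm, opNorm, map_neg, norm_neg]
    rw [hneg, hnn] at h1
    have h2 := nsq_nonneg v
    nlinarith
  have hp0 : ∀ v : Fin d × Fin d → ℂ, 0 ≤ energyR p v := by
    intro v
    rw [hfact]
    have := hhub v
    linarith
  have hp2 : ∀ v : Fin d × Fin d → ℂ, energyR p v ≤ 2 * nsq v := by
    intro v
    rw [hfact]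
    have := hhlb v
    linarith
  -- bond relation
  have hbond : ∀ (φ : (Fin (M + 1) → Fin d) → ℂ) (i : ℕ), i + 1 < M + 1 →
      bondE h (M + 1) φ i = nsq φ - bondE p (M + 1) φ i := by
    intro φ i hi
    rw [bondE, bondE, dif_pos hi, dif_pos hi]
    have hts : twoSite (M + 1) p i hi
        = twoSite (M + 1) (1 : Matrix (Fin d × Fin d) (Fin d × Fin d) ℂ) i hi
          - twoSite (M + 1) h i hi := twoSite_sub (M + 1) 1 h i hi
    rw [hts, energyR_sub, twoSite_one, energyR_one]
    ring
  -- rewrite the target energy as a bond sum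
  have hLHS : energyR (∑ i : (Finset.Ico a (b - 1)),
        twoSite (M + 1) h i.val (by have := (Finset.mem_Ico.mp i.2); omega)) η
      = ∑ i ∈ Finset.Ico a (b - 1), bondE h (M + 1) η i := by
    rw [energyR_sum]
    rw [← Finset.sum_coe_sort (Finset.Ico a (b - 1)) (fun i => bondE h (M + 1) η i)]
    refine Finset.sum_congr rfl fun i _ => ?_
    have hi : i.val + 1 < M + 1 := by have := Finset.mem_Ico.mp i.2; omega
    rw [bondE, dif_pos hi]
  set m := b - 1 - a with hm
  have hcard : (Finset.Ico a (b - 1)).card = m := by rw [Nat.card_Ico]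
  have hsum1 : ∑ i ∈ Finset.Ico a (b - 1), bondE h (M + 1) η i
      = (m : ℝ) - ∑ i ∈ Finset.Ico a (b - 1), bondE p (M + 1) η i := by
    have step : ∀ i ∈ Finset.Ico a (b - 1),
        bondE h (M + 1) η i = 1 - bondE p (M + 1) η i := by
      intro i hi
      have hi' : i + 1 < M + 1 := by have := Finset.mem_Ico.mp hi; omega
      rw [hbond η i hi', hnη]
    rw [Finset.sum_congr rfl step, Finset.sum_sub_distrib, Finset.sum_const, hcard]
    simp
  set P := ∑ i ∈ Finset.Ico a (b - 1), bondE p (M + 1) η i with hPdef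
  have hPle : P ≤ gE p m := by
    have hIco : Finset.Ico a (b - 1) = Finset.Ico a (a + m) := by congr 1; omega
    rw [hPdef, hIco]
    have := window_le p hd hp2 (M + 1) m a (by omega) η
    rwa [hnη, mul_one] at this
  -- ground energy of the full chain bounds gE p M
  have hgEM : gE p M ≤ (M : ℝ) - E0 := by
    refine csSup_le (ES_nonempty p hd M) fun r hr => ?_
    obtain ⟨u, hu, rfl⟩ := hr
    have hEu : E0 ≤ energyR (chainH (M + 1) h) u := hE0.2 ⟨u, hu, rfl⟩
    have h1 : energyR (chainH (M + 1) p) u = (M : ℝ) - energyR (chainH (M + 1) h) u := by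
      rw [chainH_energy, chainH_energy]
      have step : ∀ i ∈ Finset.range (M + 1 - 1),
          bondE p (M + 1) u i = 1 - bondE h (M + 1) u i := by
        intro i hi
        have hi' : i + 1 < M + 1 := by have := Finset.mem_range.mp hi; omega
        rw [hbond u i hi', hu]
        ring
      rw [Finset.sum_congr rfl step, Finset.sum_sub_distrib, Finset.sum_const]
      simp
    linarith
  -- master inequality
  have hmaster := master_ineq (gE p) (gE_zero p hd hp0 hp2)
    (gE_nonneg p hd hp0 hp2) (gE_subadd p hd hp2) (gE_superadd p hd hp0 hp2) m M
  -- numerics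
  have hMr : (0 : ℝ) < M := by exact_mod_cast hM
  have hgmnn : 0 ≤ gE p m := gE_nonneg p hd hp0 hp2 m
  have hchain : (M : ℝ) * P ≤ ((m : ℝ) + 1) * ((M : ℝ) - E0) := by
    calc (M : ℝ) * P ≤ (M : ℝ) * gE p m := by
          apply mul_le_mul_of_nonneg_left hPle (le_of_lt hMr)
      _ ≤ ((m : ℝ) + 1) * gE p M := hmaster
      _ ≤ ((m : ℝ) + 1) * ((M : ℝ) - E0) := by
          apply mul_le_mul_of_nonneg_left hgEM
          positivity
  have hb' : b = a + m + 1 := by omega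
  have hba : (b : ℝ) - a = (m : ℝ) + 1 := by
    rw [hb']
    push_cast
    ring
  have hN1 : ((M + 1 : ℕ) : ℝ) - 1 = (M : ℝ) := by push_cast; ring
  rw [hLHS, hsum1, hba, hN1]
  rw [div_mul_eq_mul_div, sub_le_iff_le_add, div_le_iff₀ hMr]
  nlinarith [hchain]
end Pair
end

section
/- Let |ψ⟩ be a pure state on a bipartite system L⊗R with reduced states τ_L, τ_R. Let P_L be the projector onto the top-χ eigenvectors of τ_L, q = 1/Tr(P_L τ_L), and |ν⟩ = √q P_L|ψ⟩. Then for all operators A on L and B on R with ‖A‖,‖B‖ ≤ 1, |⟨ν|A⊗B|ν⟩ − ⟨ν|A⊗I|ν⟩⟨ν|I⊗B|ν⟩| ≤ (q+q²)·Cor(L:R)_{|ψ⟩}, where Cor(L:R)_{|ψ⟩} = max_{‖M‖,‖N‖≤1} |⟨ψ|M⊗N|ψ⟩ − ⟨ψ|M⊗I|ψ⟩⟨ψ|I⊗N|ψ⟩|. -/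
open Matrix
open scoped Kronecker

/-- Outer product `|φ⟩⟨φ|`. -/
noncomputable def outerM {n : Type*} (φ : n → ℂ) : Matrix n n ℂ :=
  Matrix.vecMulVec φ (star φ)

/-- Partial trace over the second factor `R`. -/
noncomputable def ptraceR {L R : Type*} [Fintype L] [Fintype R]
    (σ : Matrix (L × R) (L × R) ℂ) : Matrix L L ℂ :=
  Matrix.of fun a a' => ∑ b, σ (a, b) (a', b)

/-- Expectation value `⟨φ|C|φ⟩`. -/
noncomputable def expval {n : Type*} [Fintype n] (C : Matrix n n ℂ) (φ : n → ℂ) : ℂ :=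
  star φ ⬝ᵥ C.mulVec φ

open scoped Matrix.Norms.L2Operator

lemma opNorm_eq_norm {n : Type*} [Fintype n] [DecidableEq n] (A : Matrix n n ℂ) :
    opNorm A = ‖A‖ := (Matrix.cstar_norm_def A).symm

lemma abs_expval_le {n : Type*} [Fintype n] [DecidableEq n] (A : Matrix n n ℂ) (v : n → ℂ) :
    ‖expval A v‖ ≤ opNorm A * ∑ i, ‖v i‖ ^ 2 := by
  set x : EuclideanSpace ℂ n := (WithLp.equiv 2 _).symm v with hx
  have h1 : expval A v = inner ℂ x (Matrix.toEuclideanCLM (𝕜 := ℂ) A x) := by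
    rw [hx, WithLp.equiv_symm_apply, Matrix.toEuclideanCLM_toLp, EuclideanSpace.inner_toLp_toLp,
      expval, dotProduct_comm]
  have hxn : ‖x‖ ^ 2 = ∑ i, ‖v i‖ ^ 2 := by
    rw [EuclideanSpace.norm_eq, Real.sq_sqrt]
    · rfl
    · positivity
  calc ‖expval A v‖ = ‖inner ℂ x (Matrix.toEuclideanCLM (𝕜 := ℂ) A x)‖ := by
        rw [h1]
    _ ≤ ‖x‖ * ‖Matrix.toEuclideanCLM (𝕜 := ℂ) A x‖ := norm_inner_le_norm _ _
    _ ≤ ‖x‖ * (opNorm A * ‖x‖) := by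
        gcongr
        exact (Matrix.toEuclideanCLM (𝕜 := ℂ) A).le_opNorm x
    _ = opNorm A * ‖x‖ ^ 2 := by ring
    _ = opNorm A * ∑ i, ‖v i‖ ^ 2 := by rw [hxn]

lemma expval_kron_one_split {L R : Type*} [Fintype L] [Fintype R] [DecidableEq R]
    (A : Matrix L L ℂ) (φ : L × R → ℂ) :
    expval (A ⊗ₖ (1 : Matrix R R ℂ)) φ = ∑ b, expval A (fun a => φ (a, b)) := by
  simp only [expval, dotProduct, mulVec, Matrix.kroneckerMap_apply, Fintype.sum_prod_type,
    Matrix.one_apply, mul_ite, mul_one, mul_zero, ite_mul, zero_mul, Finset.sum_ite_eq,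
    Finset.mem_univ, if_true, Pi.star_apply, RCLike.star_def]
  rw [Finset.sum_comm]

lemma abs_expval_kron_one_le {L R : Type*} [Fintype L] [Fintype R] [DecidableEq L] [DecidableEq R]
    (A : Matrix L L ℂ) (φ : L × R → ℂ) (hA : opNorm A ≤ 1) (h : (∑ x, ‖φ x‖ ^ 2) = 1) :
    ‖expval (A ⊗ₖ (1 : Matrix R R ℂ)) φ‖ ≤ 1 := by
  rw [expval_kron_one_split]
  calc ‖∑ b, expval A (fun a => φ (a, b))‖
      ≤ ∑ b, ‖expval A (fun a => φ (a, b))‖ := by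
        exact norm_sum_le _ _
    _ ≤ ∑ b, opNorm A * ∑ a, ‖φ (a, b)‖ ^ 2 :=
        Finset.sum_le_sum fun b _ => abs_expval_le A _
    _ ≤ ∑ b, 1 * ∑ a, ‖φ (a, b)‖ ^ 2 := by
        exact Finset.sum_le_sum fun b _ =>
          mul_le_mul_of_nonneg_right hA (Finset.sum_nonneg fun a _ => sq_nonneg _)
    _ = ∑ x : L × R, ‖φ x‖ ^ 2 := by
        simp only [one_mul]
        rw [Fintype.sum_prod_type, Finset.sum_comm]
    _ = 1 := h

lemma kron_conjT {L R : Type*} (A : Matrix L L ℂ) (B : Matrix R R ℂ) :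
    (A ⊗ₖ B)ᴴ = Aᴴ ⊗ₖ Bᴴ := by
  ext ⟨a, b⟩ ⟨a', b'⟩
  simp [Matrix.conjTranspose_apply, mul_comm]

lemma expval_sandwich {n : Type*} [Fintype n] (Q C : Matrix n n ℂ) (ψ : n → ℂ) :
    expval (Qᴴ * C * Q) ψ = star (Q *ᵥ ψ) ⬝ᵥ C *ᵥ (Q *ᵥ ψ) := by
  simp [expval, Matrix.star_mulVec, Matrix.mulVec_mulVec, Matrix.dotProduct_mulVec,
    Matrix.vecMul_vecMul, Matrix.mul_assoc]

lemma expval_smul {n : Type*} [Fintype n] (C : Matrix n n ℂ) (r : ℝ) (w : n → ℂ) :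
    expval C (fun x => (r : ℂ) * w x) = (r : ℂ) ^ 2 * expval C w := by
  have h : (fun x => (r : ℂ) * w x) = (r : ℂ) • w := rfl
  rw [expval, h, star_smul, Matrix.mulVec_smul, smul_dotProduct, dotProduct_smul]
  simp [expval, Complex.conj_ofReal]
  ring_nf

lemma trace_eq_expval {L R : Type*} [Fintype L] [Fintype R] [DecidableEq R]
    (P : Matrix L L ℂ) (ψ : L × R → ℂ) :
    (P * ptraceR (outerM ψ)).trace = expval (P ⊗ₖ (1 : Matrix R R ℂ)) ψ := by
  simp only [Matrix.trace, Matrix.diag, Matrix.mul_apply, ptraceR, outerM,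
    Matrix.vecMulVec_apply, Matrix.of_apply, expval, dotProduct, mulVec,
    Matrix.kroneckerMap_apply, Matrix.one_apply, Fintype.sum_prod_type,
    mul_ite, mul_one, mul_zero, ite_mul, zero_mul, Finset.sum_ite_eq,
    Finset.mem_univ, if_true, Pi.star_apply, RCLike.star_def, Finset.mul_sum,
    Finset.sum_mul]
  refine Finset.sum_congr rfl fun a _ => ?_
  rw [Finset.sum_comm]
  exact Finset.sum_congr rfl fun b _ => Finset.sum_congr rfl fun a' _ => by ring

lemma dot_self_eq {n : Type*} [Fintype n] (w : n → ℂ) :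
    star w ⬝ᵥ w = ((∑ x, ‖w x‖ ^ 2 : ℝ) : ℂ) := by
  push_cast
  simp only [dotProduct, Pi.star_apply, RCLike.star_def]
  refine Finset.sum_congr rfl fun x _ => ?_
  rw [mul_comm, Complex.mul_conj']

/-- Truncating a pure bipartite state by a projector `P_L` commuting with its left marginal
increases correlations by at most a factor `q + q²`, where `q = 1/Tr(P_L τ_L)` and
`|ν⟩ = √q P_L |ψ⟩`. -/
theorem correlations_of_projected_state
    {L R : Type*} [Fintype L] [Fintype R] [DecidableEq L] [DecidableEq R]
    (ψ : L × R → ℂ) (hψ : (∑ x, ‖ψ x‖ ^ 2) = 1)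
    (P : Matrix L L ℂ) (hproj : P * P = P) (hherm : Pᴴ = P)
    (hcomm : P * ptraceR (outerM ψ) = ptraceR (outerM ψ) * P)
    (q : ℝ) (hq : q = 1 / ((P * ptraceR (outerM ψ)).trace.re))
    (hqpos : 0 < (P * ptraceR (outerM ψ)).trace.re)
    (ν : L × R → ℂ)
    (hν : ν = fun x => (Real.sqrt q : ℂ) * ((P ⊗ₖ (1 : Matrix R R ℂ)).mulVec ψ) x)
    (c : ℝ)
    (hCor : ∀ (M : Matrix L L ℂ) (N' : Matrix R R ℂ), opNorm M ≤ 1 → opNorm N' ≤ 1 →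
      ‖expval (M ⊗ₖ N') ψ -
        expval (M ⊗ₖ (1 : Matrix R R ℂ)) ψ * expval ((1 : Matrix L L ℂ) ⊗ₖ N') ψ‖ ≤ c) :
    ∀ (A : Matrix L L ℂ) (B : Matrix R R ℂ), opNorm A ≤ 1 → opNorm B ≤ 1 →
      ‖expval (A ⊗ₖ B) ν -
        expval (A ⊗ₖ (1 : Matrix R R ℂ)) ν * expval ((1 : Matrix L L ℂ) ⊗ₖ B) ν‖ ≤
        (q + q ^ 2) * c := by
  intro A B hA hB
  have hqpos' : 0 < q := by rw [hq]; positivity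
  set Q : Matrix (L × R) (L × R) ℂ := P ⊗ₖ (1 : Matrix R R ℂ) with hQ
  have hQH : Qᴴ = Q := by rw [hQ, kron_conjT, hherm, Matrix.conjTranspose_one]
  -- sandwich identity for expectation values in ν
  have hsand : ∀ C : Matrix (L × R) (L × R) ℂ,
      expval C ν = (q : ℂ) * expval (Q * C * Q) ψ := by
    intro C
    calc expval C ν = (Real.sqrt q : ℂ) ^ 2 * expval C (Q *ᵥ ψ) := by
          rw [hν]; exact expval_smul C (Real.sqrt q) (Q *ᵥ ψ)
      _ = (q : ℂ) * expval C (Q *ᵥ ψ) := by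
          norm_cast; rw [Real.sq_sqrt hqpos'.le]
      _ = (q : ℂ) * expval (Qᴴ * C * Q) ψ := by
          congr 1
          exact (expval_sandwich Q C ψ).symm
      _ = (q : ℂ) * expval (Q * C * Q) ψ := by rw [hQH]
  have e1 : expval (A ⊗ₖ B) ν = (q : ℂ) * expval ((P * A * P) ⊗ₖ B) ψ := by
    rw [hsand]
    congr 2
    rw [hQ, ← Matrix.mul_kronecker_mul, ← Matrix.mul_kronecker_mul, Matrix.one_mul,
      Matrix.mul_one]
  have e2 : expval (A ⊗ₖ (1 : Matrix R R ℂ)) ν =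
      (q : ℂ) * expval ((P * A * P) ⊗ₖ (1 : Matrix R R ℂ)) ψ := by
    rw [hsand]
    congr 2
    rw [hQ, ← Matrix.mul_kronecker_mul, ← Matrix.mul_kronecker_mul, Matrix.one_mul,
      Matrix.mul_one]
  have e3 : expval ((1 : Matrix L L ℂ) ⊗ₖ B) ν = (q : ℂ) * expval (P ⊗ₖ B) ψ := by
    rw [hsand]
    congr 2
    rw [hQ, ← Matrix.mul_kronecker_mul, ← Matrix.mul_kronecker_mul, Matrix.one_mul,
      Matrix.mul_one, Matrix.mul_one, hproj]
  -- the normalization identity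
  set s : ℝ := ∑ x, ‖(Q *ᵥ ψ) x‖ ^ 2 with hs
  have hw : expval (P ⊗ₖ (1 : Matrix R R ℂ)) ψ = ((s : ℝ) : ℂ) := by
    have hPQ : (P ⊗ₖ (1 : Matrix R R ℂ)) = Qᴴ * 1 * Q := by
      rw [hQH, Matrix.mul_one, hQ, ← Matrix.mul_kronecker_mul, hproj, Matrix.one_mul]
    rw [hPQ, expval_sandwich, Matrix.one_mulVec, dot_self_eq]
  have hsre : ((P * ptraceR (outerM ψ)).trace).re = s := by
    rw [trace_eq_expval, hw]
    simp
  have hspos : 0 < s := by rw [← hsre]; exact hqpos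
  have hq1 : q * s = 1 := by
    rw [hq, hsre]
    field_simp
  have hone : (q : ℂ) * expval (P ⊗ₖ (1 : Matrix R R ℂ)) ψ = 1 := by
    rw [hw]
    norm_cast
  -- operator norm bounds
  have hP1 : opNorm P ≤ 1 := by
    rw [opNorm_eq_norm]
    have h2 := Matrix.l2_opNorm_conjTranspose_mul_self P
    rw [hherm, hproj] at h2
    nlinarith [norm_nonneg P]
  have hM1 : opNorm (P * A * P) ≤ 1 := by
    rw [opNorm_eq_norm] at *
    calc ‖P * A * P‖ ≤ ‖P * A‖ * ‖P‖ := Matrix.l2_opNorm_mul _ _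
      _ ≤ ‖P‖ * ‖A‖ * ‖P‖ :=
          mul_le_mul_of_nonneg_right (Matrix.l2_opNorm_mul _ _) (norm_nonneg _)
      _ ≤ 1 := by
          have := norm_nonneg P
          have := norm_nonneg A
          nlinarith [mul_nonneg (norm_nonneg P) (norm_nonneg A)]
  have hEM : ‖expval ((P * A * P) ⊗ₖ (1 : Matrix R R ℂ)) ψ‖ ≤ 1 :=
    abs_expval_kron_one_le _ _ hM1 hψ
  have hD1 := hCor (P * A * P) B hM1 hB
  have hD2 := hCor P B hP1 hB
  have hc0 : 0 ≤ c := by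
    have h0 := hCor 0 0 (by rw [opNorm_eq_norm]; simp) (by rw [opNorm_eq_norm]; simp)
    simpa [expval, Matrix.zero_kronecker, Matrix.kronecker_zero, Matrix.zero_mulVec] using h0
  -- final algebra
  rw [e1, e2, e3]
  set x1 := expval ((P * A * P) ⊗ₖ B) ψ
  set x2 := expval ((P * A * P) ⊗ₖ (1 : Matrix R R ℂ)) ψ
  set x3 := expval ((1 : Matrix L L ℂ) ⊗ₖ B) ψ
  set x4 := expval (P ⊗ₖ B) ψ
  set x5 := expval (P ⊗ₖ (1 : Matrix R R ℂ)) ψ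
  have key : (q : ℂ) * x1 - ((q : ℂ) * x2) * ((q : ℂ) * x4) =
      (q : ℂ) * (x1 - x2 * x3) - (q : ℂ) ^ 2 * x2 * (x4 - x5 * x3) := by
    linear_combination (-(q : ℂ) * x2 * x3) * hone
  rw [key]
  calc ‖(q : ℂ) * (x1 - x2 * x3) - (q : ℂ) ^ 2 * x2 * (x4 - x5 * x3)‖
      ≤ ‖(q : ℂ) * (x1 - x2 * x3)‖ + ‖(q : ℂ) ^ 2 * x2 * (x4 - x5 * x3)‖ := norm_sub_le _ _
    _ = q * ‖x1 - x2 * x3‖ + q ^ 2 * (‖x2‖ * ‖x4 - x5 * x3‖) := by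
        rw [norm_mul, norm_mul, norm_mul, norm_pow]
        simp [Complex.norm_real, abs_of_pos hqpos']
        ring
    _ ≤ q * c + q ^ 2 * (1 * c) := by
        gcongr
    _ = (q + q ^ 2) * c := by ring
end

section
/- Let σ_{LR} be a density matrix on L⊗R whose reduced state σ_L has rank at most χ, and suppose Cor(L:R)_σ := max_{‖A‖,‖B‖≤1} Tr((A⊗B)(σ_{LR} − σ_L⊗σ_R)) ≤ δ. Then ‖σ_{LR} − σ_L⊗σ_R‖_1 ≤ χ²·δ. -/
open Matrix
open scoped Kronecker ComplexOrder

/-- Trace norm `‖A‖₁ = Tr √(Aᴴ A)`. -/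
noncomputable def traceNorm {n : Type*} [Fintype n] [DecidableEq n]
    (A : Matrix n n ℂ) : ℝ :=
  ((Matrix.posSemidef_conjTranspose_mul_self A).1.eigenvectorUnitary.1 *
    diagonal (((↑) : ℝ → ℂ) ∘ (√·) ∘ (Matrix.posSemidef_conjTranspose_mul_self A).1.eigenvalues) *
    (star (Matrix.posSemidef_conjTranspose_mul_self A).1.eigenvectorUnitary : Matrix n n ℂ)).trace.re

/-- Partial trace over the first factor `L`. -/
noncomputable def ptraceL {L R : Type*} [Fintype L] [Fintype R]
    (σ : Matrix (L × R) (L × R) ℂ) : Matrix R R ℂ :=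
  Matrix.of fun b b' => ∑ a, σ (a, b) (a, b')

set_option linter.unusedSectionVars false

namespace Matrix.PosSemidef

open scoped MatrixOrder

variable {n : Type*} [Fintype n] [DecidableEq n]

noncomputable def sqrt {A : Matrix n n ℂ} (_hA : A.PosSemidef) : Matrix n n ℂ := CFC.sqrt A

lemma posSemidef_sqrt {A : Matrix n n ℂ} (hA : A.PosSemidef) : hA.sqrt.PosSemidef :=
  (CFC.sqrt_nonneg A).posSemidef

lemma sqrt_mul_self {A : Matrix n n ℂ} (hA : A.PosSemidef) : hA.sqrt * hA.sqrt = A :=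
  CFC.sqrt_mul_sqrt_self A hA.nonneg

lemma eq_sqrt_of_sq_eq {B : Matrix n n ℂ} (hB : B.PosSemidef) {A : Matrix n n ℂ}
    (hA : A.PosSemidef) (h : B ^ 2 = A) : B = hA.sqrt :=
  (CFC.sqrt_unique (by rw [← h, sq]) hB.nonneg).symm

lemma sqrt_eq_cfc {A : Matrix n n ℂ} (hA : A.PosSemidef) : hA.sqrt = hA.1.cfc Real.sqrt := by
  rw [sqrt, CFC.sqrt_eq_cfc, cfc_nnreal_eq_real _ A, hA.1.cfc_eq]
  congr 1
  funext x
  rw [Real.sqrt]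

end Matrix.PosSemidef
set_option linter.unusedTactic false

namespace CorAux

section Square

variable {n : Type*} [Fintype n] [DecidableEq n]

lemma opNorm_nonneg (A : Matrix n n ℂ) : 0 ≤ opNorm A := norm_nonneg _

lemma traceNorm_eq_sqrt (A : Matrix n n ℂ) :
    traceNorm A = (Matrix.posSemidef_conjTranspose_mul_self A).sqrt.trace.re := by
  rw [PosSemidef.sqrt_eq_cfc, IsHermitian.cfc, Unitary.conjStarAlgAut_apply]
  rfl

lemma opNorm_conjTranspose_mul_self (A : Matrix n n ℂ) :
    opNorm (Aᴴ * A) = opNorm A * opNorm A := by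
  unfold opNorm
  rw [_root_.map_mul]
  have h1 : toEuclideanCLM (𝕜 := ℂ) Aᴴ = star (toEuclideanCLM (𝕜 := ℂ) A) := by
    rw [← Matrix.star_eq_conjTranspose, map_star]
  rw [h1, ContinuousLinearMap.star_eq_adjoint]
  exact ContinuousLinearMap.norm_adjoint_comp_self _

lemma opNorm_one_le : opNorm (1 : Matrix n n ℂ) ≤ 1 := by
  unfold opNorm
  rw [_root_.map_one]
  exact ContinuousLinearMap.norm_id_le

lemma opNorm_le_one_of_unitary {A : Matrix n n ℂ} (h : Aᴴ * A = 1) : opNorm A ≤ 1 := by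
  have h2 : opNorm A * opNorm A ≤ 1 := by
    rw [← opNorm_conjTranspose_mul_self, h]; exact opNorm_one_le
  nlinarith [opNorm_nonneg A]

lemma trace_ct_mul_self_eq_zero {m n : Type*} [Fintype m] [Fintype n]
    {X : Matrix m n ℂ} (h : (Xᴴ * X).trace = 0) : X = 0 := by
  have h2 : ∑ j, ∑ i, Complex.normSq (X i j) = 0 := by
    have h3 : (Xᴴ * X).trace = ((∑ j, ∑ i, Complex.normSq (X i j) : ℝ) : ℂ) := by
      rw [Matrix.trace]
      push_cast
      refine Finset.sum_congr rfl fun j _ => ?_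
      rw [Matrix.diag_apply, Matrix.mul_apply]
      refine Finset.sum_congr rfl fun i _ => ?_
      rw [Matrix.conjTranspose_apply, Complex.normSq_eq_conj_mul_self]; rfl
    rw [h3] at h
    exact_mod_cast h
  ext i j
  have h4 : ∀ j ∈ Finset.univ, ∀ i ∈ Finset.univ, (0:ℝ) ≤ Complex.normSq (X i j) :=
    fun _ _ _ _ => Complex.normSq_nonneg _
  have h5 := (Finset.sum_eq_zero_iff_of_nonneg
    (fun j _ => Finset.sum_nonneg (h4 j (Finset.mem_univ j)))).mp h2 j (Finset.mem_univ j)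
  have h6 := (Finset.sum_eq_zero_iff_of_nonneg (h4 j (Finset.mem_univ j))).mp h5 i
    (Finset.mem_univ i)
  simpa using Complex.normSq_eq_zero.mp h6

lemma psd_trace_zero {A : Matrix n n ℂ}
    (hA : A.PosSemidef) (h : A.trace = 0) : A = 0 := by
  have hs : hA.sqrtᴴ * hA.sqrt = A := by
    rw [hA.posSemidef_sqrt.1, hA.sqrt_mul_self]
  have h0 : hA.sqrt = 0 := trace_ct_mul_self_eq_zero (by rw [hs, h])
  rw [← hs, h0, Matrix.conjTranspose_zero, Matrix.mul_zero]

lemma mul_proj_eq_zero {A P : Matrix n n ℂ}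
    (hA : A.PosSemidef) (hP : Pᴴ = P) (hPP : P * P = P) (h : (P * A).trace = 0) :
    A * P = 0 ∧ P * A = 0 := by
  have h1 : (P * A * P).PosSemidef := by
    have := hA.mul_mul_conjTranspose_same P
    rwa [hP] at this
  have h2 : (P * A * P).trace = 0 := by
    rw [Matrix.trace_mul_comm (P * A) P, ← Matrix.mul_assoc, hPP, h]
  have h3 : P * A * P = 0 := psd_trace_zero h1 h2
  have hs : hA.sqrtᴴ * hA.sqrt = A := by
    rw [hA.posSemidef_sqrt.1, hA.sqrt_mul_self]
  have h4 : (hA.sqrt * P)ᴴ * (hA.sqrt * P) = 0 := by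
    rw [Matrix.conjTranspose_mul, hA.posSemidef_sqrt.1, hP]
    calc P * hA.sqrt * (hA.sqrt * P) = P * (hA.sqrtᴴ * hA.sqrt) * P := by
          rw [hA.posSemidef_sqrt.1]; noncomm_ring
      _ = 0 := by rw [hs, h3]
  have h5 : hA.sqrt * P = 0 := Matrix.conjTranspose_mul_self_eq_zero.mp h4
  have h6 : A * P = 0 := by
    rw [← hs, hA.posSemidef_sqrt.1, Matrix.mul_assoc, h5, Matrix.mul_zero]
  refine ⟨h6, ?_⟩
  have h7 : P * A = (A * P)ᴴ := by
    rw [Matrix.conjTranspose_mul, hA.1.eq, hP]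
  rw [h7, h6, Matrix.conjTranspose_zero]

lemma exists_dual (M : Matrix n n ℂ) (hM : M.IsHermitian) :
    ∃ T : Matrix n n ℂ, Tᴴ * T = 1 ∧ traceNorm M = ((T * M).trace).re := by
  set W : Matrix n n ℂ := (hM.eigenvectorUnitary : Matrix n n ℂ) with hWdef
  have hW1 : star W * W = 1 := Matrix.mem_unitaryGroup_iff'.mp hM.eigenvectorUnitary.2
  have hW2 : W * star W = 1 := Matrix.mem_unitaryGroup_iff.mp hM.eigenvectorUnitary.2
  have key : ∀ d e : n → ℂ,
      (W * diagonal d * star W) * (W * diagonal e * star W)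
        = W * diagonal (fun i => d i * e i) * star W := by
    intro d e
    calc (W * diagonal d * star W) * (W * diagonal e * star W)
        = W * diagonal d * (star W * W) * diagonal e * star W := by noncomm_ring
      _ = W * (diagonal d * diagonal e) * star W := by rw [hW1]; noncomm_ring
      _ = W * diagonal (fun i => d i * e i) * star W := by
          rw [diagonal_mul_diagonal]
  set lam := hM.eigenvalues with hlam
  set c : n → ℂ := fun i => if lam i < 0 then -1 else 1 with hc
  set T : Matrix n n ℂ := W * diagonal c * star W with hT
  set S : Matrix n n ℂ := W * diagonal (fun i => ((|lam i| : ℝ) : ℂ)) * star W with hS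
  have hspec : M = W * diagonal (RCLike.ofReal ∘ lam) * star W := hM.spectral_theorem
  have hSpsd : S.PosSemidef := by
    have hD : (diagonal (fun i => ((|lam i| : ℝ) : ℂ))).PosSemidef :=
      posSemidef_diagonal_iff.mpr fun i => by
        rw [Complex.zero_le_real]; exact abs_nonneg _
    have := hD.mul_mul_conjTranspose_same W
    rwa [← Matrix.star_eq_conjTranspose] at this
  have habs : (fun i => ((|lam i| : ℝ) : ℂ) * ((|lam i| : ℝ) : ℂ))
      = (fun i => (RCLike.ofReal ∘ lam) i * (RCLike.ofReal ∘ lam) i) := by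
    funext i
    simp only [Function.comp_apply]
    rw [← Complex.ofReal_mul, abs_mul_abs_self, Complex.ofReal_mul]
    norm_cast
  have hSsq : S ^ 2 = Mᴴ * M := by
    rw [hM.eq, pow_two, hS, key, habs]
    conv_rhs => rw [hspec, key]
  have hsqrt : S = (Matrix.posSemidef_conjTranspose_mul_self M).sqrt :=
    hSpsd.eq_sqrt_of_sq_eq _ hSsq
  have hsgn : (fun i => c i * (RCLike.ofReal ∘ lam) i)
      = (fun i => ((|lam i| : ℝ) : ℂ)) := by
    funext i
    simp only [Function.comp_apply, hc]
    by_cases h : lam i < 0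
    · rw [if_pos h, abs_of_neg h]
      push_cast
      rw [neg_one_mul]
      simp [RCLike.ofReal]
    · rw [if_neg h, abs_of_nonneg (not_lt.mp h)]
      push_cast
      rw [one_mul]
      simp [RCLike.ofReal]
  have hTM : T * M = S := by
    conv_lhs => rw [hT, hspec]
    rw [key, hsgn]
  refine ⟨T, ?_, ?_⟩
  · have hTct : Tᴴ = W * diagonal (fun i => star (c i)) * star W := by
      rw [hT, Matrix.conjTranspose_mul, Matrix.conjTranspose_mul, Matrix.diagonal_conjTranspose]
      rw [← Matrix.star_eq_conjTranspose, ← Matrix.star_eq_conjTranspose, star_star]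
      rw [Matrix.mul_assoc]
      rfl
    rw [hTct, hT, key]
    have hone : (fun i => star (c i) * c i) = fun _ => (1 : ℂ) := by
      funext i
      simp only [hc]
      by_cases h : lam i < 0 <;> simp [h]
    rw [hone, diagonal_one, Matrix.mul_one, hW2]
  · rw [hTM, traceNorm_eq_sqrt, ← hsqrt]

lemma euclid_norm_sq {m : Type*} [Fintype m] (g : m → ℂ) :
    ‖(WithLp.equiv 2 (m → ℂ)).symm g‖ ^ 2 = ∑ i, Complex.normSq (g i) := by
  rw [EuclideanSpace.norm_eq, Real.sq_sqrt (Finset.sum_nonneg fun i _ => sq_nonneg _)]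
  refine Finset.sum_congr rfl fun i _ => ?_
  rw [show (WithLp.equiv 2 (m → ℂ)).symm g i = g i from rfl,
    Complex.sq_norm]

lemma euclid_norm_eq_one {u : n → ℂ} (hu : ∑ x, Complex.normSq (u x) = 1) :
    ‖(WithLp.equiv 2 (n → ℂ)).symm u‖ = 1 := by
  rw [EuclideanSpace.norm_eq]
  have h : ∀ x : n, ‖(WithLp.equiv 2 (n → ℂ)).symm u x‖ ^ 2 = Complex.normSq (u x) := by
    intro x
    rw [show (WithLp.equiv 2 (n → ℂ)).symm u x = u x from rfl]
    rw [Complex.sq_norm]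
  rw [Finset.sum_congr rfl fun x _ => h x, hu, Real.sqrt_one]

lemma opNorm_vecMulVec_le {u v : n → ℂ} (hu : ∑ x, Complex.normSq (u x) = 1)
    (hv : ∑ x, Complex.normSq (v x) = 1) :
    opNorm (vecMulVec u (star v)) ≤ 1 := by
  refine ContinuousLinearMap.opNorm_le_bound _ zero_le_one fun x => ?_
  have hx : toEuclideanCLM (𝕜 := ℂ) (vecMulVec u (star v)) x
      = ((star v ⬝ᵥ (WithLp.equiv 2 (n → ℂ) x)) : ℂ) • ((WithLp.equiv 2 (n → ℂ)).symm u) := by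
    have h1 : toEuclideanCLM (𝕜 := ℂ) (vecMulVec u (star v)) x
        = (WithLp.equiv 2 (n → ℂ)).symm ((vecMulVec u (star v)) *ᵥ (WithLp.equiv 2 (n → ℂ) x)) :=
      rfl
    rw [h1]
    have h2 : (vecMulVec u (star v)) *ᵥ (WithLp.equiv 2 (n → ℂ) x)
        = (star v ⬝ᵥ (WithLp.equiv 2 (n → ℂ) x)) • u := by
      funext i
      simp only [mulVec, dotProduct, vecMulVec_apply, Pi.smul_apply, smul_eq_mul,
        Finset.sum_mul]
      exact Finset.sum_congr rfl fun j _ => by ring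
    rw [h2]
    rfl
  rw [hx, norm_smul, euclid_norm_eq_one hu]
  have h3 : star v ⬝ᵥ (WithLp.equiv 2 (n → ℂ) x)
      = inner ℂ ((WithLp.equiv 2 (n → ℂ)).symm v) x := by
    rw [EuclideanSpace.inner_eq_star_dotProduct, dotProduct_comm]
    rfl
  rw [h3, mul_one, one_mul]
  calc ‖(inner ℂ ((WithLp.equiv 2 (n → ℂ)).symm v) x : ℂ)‖
      ≤ ‖(WithLp.equiv 2 (n → ℂ)).symm v‖ * ‖x‖ := norm_inner_le_norm _ _
    _ = ‖x‖ := by rw [euclid_norm_eq_one hv, one_mul]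

end Square

section Rect

variable {L R : Type*} [Fintype L] [Fintype R] [DecidableEq L] [DecidableEq R]

lemma norm_eq_of_sq_eq {a b : ℝ} (h : a ^ 2 = b ^ 2) (ha : 0 ≤ a) (hb : 0 ≤ b) : a = b := by
  nlinarith

lemma trace_kron_one_mul (X : Matrix L L ℂ) (σ : Matrix (L × R) (L × R) ℂ) :
    ((X ⊗ₖ (1 : Matrix R R ℂ)) * σ).trace = (X * ptraceR σ).trace := by
  rw [Matrix.trace, Matrix.trace]
  simp only [Matrix.diag_apply, Matrix.mul_apply, Fintype.sum_prod_type,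
    Matrix.kroneckerMap_apply, Matrix.one_apply, mul_ite, mul_one, mul_zero, ite_mul, zero_mul,
    Finset.sum_ite_eq, Finset.mem_univ, if_true, ptraceR, Matrix.of_apply, Finset.mul_sum]
  exact Finset.sum_congr rfl fun a _ => by rw [Finset.sum_comm]

lemma kron_conjTranspose (A : Matrix L L ℂ) (B : Matrix R R ℂ) :
    (A ⊗ₖ B)ᴴ = Aᴴ ⊗ₖ Bᴴ := by
  ext ⟨a, b⟩ ⟨a', b'⟩
  simp only [conjTranspose_apply, kroneckerMap_apply, star_mul']

lemma sum_kron {ι : Type*} (t : Finset ι) (f : ι → Matrix L L ℂ) (B : Matrix R R ℂ) :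
    (∑ i ∈ t, f i) ⊗ₖ B = ∑ i ∈ t, f i ⊗ₖ B := by
  ext ⟨a, b⟩ ⟨a', b'⟩
  simp only [Matrix.sum_apply, kroneckerMap_apply, Finset.sum_mul]

lemma conjTranspose_vecMulVec (u v : L → ℂ) :
    (vecMulVec u (star v))ᴴ = vecMulVec v (star u) := by
  ext x y
  simp only [conjTranspose_apply, vecMulVec_apply, Pi.star_apply, star_mul', star_star]
  ring

lemma vecMulVec_mul_vecMulVec (u v w t : L → ℂ) :
    vecMulVec u (star v) * vecMulVec w (star t)
      = (star v ⬝ᵥ w) • vecMulVec u (star t) := by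
  ext x y
  simp only [mul_apply, vecMulVec_apply, Pi.star_apply, Matrix.smul_apply, smul_eq_mul, dotProduct,
    Finset.sum_mul, Finset.mul_sum]
  exact Finset.sum_congr rfl fun z _ => by ring

lemma mul_vecMulVec (A : Matrix L L ℂ) (u v : L → ℂ) :
    A * vecMulVec u v = vecMulVec (A *ᵥ u) v := by
  ext x y
  simp only [mul_apply, vecMulVec_apply, mulVec, dotProduct, Finset.sum_mul]
  exact Finset.sum_congr rfl fun z _ => by ring

lemma vecMulVec_zero_left (v : L → ℂ) : vecMulVec (0 : L → ℂ) v = 0 := by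
  ext x y
  simp [vecMulVec_apply]

lemma proj_mul_mul_proj (T : Matrix (L × R) (L × R) ℂ) (u u' : L → ℂ) :
    (vecMulVec u (star u) ⊗ₖ (1 : Matrix R R ℂ)) * T * (vecMulVec u' (star u') ⊗ₖ 1)
      = vecMulVec u (star u') ⊗ₖ (Matrix.of fun b b' =>
          ∑ x, ∑ x', (starRingEnd ℂ) (u x) * T (x, b) (x', b') * u' x') := by
  ext ⟨x, b⟩ ⟨x', b'⟩
  simp only [mul_apply, kroneckerMap_apply, vecMulVec_apply, one_apply, Pi.star_apply,
    Matrix.of_apply, Fintype.sum_prod_type, mul_ite, ite_mul, mul_zero, zero_mul, mul_one,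
    one_mul, Finset.sum_ite_eq, Finset.sum_ite_eq', Finset.mem_univ, if_true,
    Finset.sum_mul, Finset.mul_sum]
  rw [Finset.sum_comm]
  refine Finset.sum_congr rfl fun y _ => Finset.sum_congr rfl fun y' _ => ?_
  simp only [RCLike.star_def]
  ring

lemma opNorm_block_le (T : Matrix (L × R) (L × R) ℂ) (hT : opNorm T ≤ 1)
    (u w : L → ℂ) (hu : ∑ x, Complex.normSq (u x) = 1) (hw : ∑ x, Complex.normSq (w x) = 1) :
    opNorm (Matrix.of fun b b' : R =>
      ∑ x, ∑ x', (starRingEnd ℂ) (u x) * T (x, b) (x', b') * w x') ≤ 1 := by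
  set B : Matrix R R ℂ := Matrix.of fun b b' : R =>
      ∑ x, ∑ x', (starRingEnd ℂ) (u x) * T (x, b) (x', b') * w x' with hB
  refine ContinuousLinearMap.opNorm_le_bound _ zero_le_one fun z => ?_
  set zf : R → ℂ := WithLp.equiv 2 (R → ℂ) z with hzf
  set yf : R → ℂ := B *ᵥ zf with hyf
  set vf : L × R → ℂ := fun p => u p.1 * yf p.2 with hvf
  set wf : L × R → ℂ := fun p => w p.1 * zf p.2 with hwf
  have happ : toEuclideanCLM (𝕜 := ℂ) B z = (WithLp.equiv 2 (R → ℂ)).symm yf := rfl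
  have hnv : ‖(WithLp.equiv 2 (L × R → ℂ)).symm vf‖ = ‖(WithLp.equiv 2 (R → ℂ)).symm yf‖ := by
    refine norm_eq_of_sq_eq ?_ (norm_nonneg _) (norm_nonneg _)
    rw [euclid_norm_sq vf, euclid_norm_sq yf]
    calc ∑ p : L × R, Complex.normSq (vf p)
        = ∑ x : L, ∑ b : R, Complex.normSq (u x) * Complex.normSq (yf b) := by
          rw [Fintype.sum_prod_type]
          exact Finset.sum_congr rfl fun x _ => Finset.sum_congr rfl fun b _ =>
            Complex.normSq_mul _ _
      _ = (∑ x, Complex.normSq (u x)) * (∑ b, Complex.normSq (yf b)) := by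
          rw [Finset.sum_mul]
          exact Finset.sum_congr rfl fun x _ => (Finset.mul_sum _ _ _).symm
      _ = ∑ b, Complex.normSq (yf b) := by rw [hu, one_mul]
  have hnw : ‖(WithLp.equiv 2 (L × R → ℂ)).symm wf‖ = ‖z‖ := by
    have hz : ‖z‖ = ‖(WithLp.equiv 2 (R → ℂ)).symm zf‖ := by rw [hzf]; rfl
    rw [hz]
    refine norm_eq_of_sq_eq ?_ (norm_nonneg _) (norm_nonneg _)
    rw [euclid_norm_sq wf, euclid_norm_sq zf]
    calc ∑ p : L × R, Complex.normSq (wf p)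
        = ∑ x : L, ∑ b : R, Complex.normSq (w x) * Complex.normSq (zf b) := by
          rw [Fintype.sum_prod_type]
          exact Finset.sum_congr rfl fun x _ => Finset.sum_congr rfl fun b _ =>
            Complex.normSq_mul _ _
      _ = (∑ x, Complex.normSq (w x)) * (∑ b, Complex.normSq (zf b)) := by
          rw [Finset.sum_mul]
          exact Finset.sum_congr rfl fun x _ => (Finset.mul_sum _ _ _).symm
      _ = ∑ b, Complex.normSq (zf b) := by rw [hw, one_mul]
  have hdot : star vf ⬝ᵥ (T *ᵥ wf) = star yf ⬝ᵥ yf := by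
    have core : ∀ b : R, (∑ x : L, ∑ q : L × R, star (vf (x, b)) * (T (x, b) q * wf q))
        = star (yf b) * yf b := by
      intro b
      have hyfb : yf b = ∑ b' : R, (∑ x : L, ∑ x' : L,
          (starRingEnd ℂ) (u x) * T (x, b) (x', b') * w x') * zf b' := rfl
      calc (∑ x : L, ∑ q : L × R, star (vf (x, b)) * (T (x, b) q * wf q))
          = ∑ x : L, ∑ x' : L, ∑ b' : R, star (vf (x, b)) * (T (x, b) (x', b') * wf (x', b')) := by
            exact Finset.sum_congr rfl fun x _ => by rw [Fintype.sum_prod_type]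
        _ = ∑ x : L, ∑ b' : R, ∑ x' : L,
              star (vf (x, b)) * (T (x, b) (x', b') * wf (x', b')) := by
            exact Finset.sum_congr rfl fun x _ => by rw [Finset.sum_comm]
        _ = ∑ b' : R, ∑ x : L, ∑ x' : L,
              star (vf (x, b)) * (T (x, b) (x', b') * wf (x', b')) := by
            rw [Finset.sum_comm]
        _ = ∑ b' : R, (∑ x : L, ∑ x' : L,
              (starRingEnd ℂ) (u x) * T (x, b) (x', b') * w x') * zf b' * star (yf b) := by
            refine Finset.sum_congr rfl fun b' _ => ?_
            rw [Finset.sum_mul, Finset.sum_mul]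
            refine Finset.sum_congr rfl fun x _ => ?_
            rw [Finset.sum_mul, Finset.sum_mul]
            refine Finset.sum_congr rfl fun x' _ => ?_
            simp only [hvf, hwf, star_mul', RCLike.star_def]
            ring
        _ = (∑ b' : R, (∑ x : L, ∑ x' : L,
              (starRingEnd ℂ) (u x) * T (x, b) (x', b') * w x') * zf b') * star (yf b) := by
            rw [Finset.sum_mul]
        _ = star (yf b) * yf b := by rw [← hyfb]; ring
    calc star vf ⬝ᵥ (T *ᵥ wf)
        = ∑ p : L × R, ∑ q : L × R, star (vf p) * (T p q * wf q) := by
          simp only [dotProduct, mulVec, Pi.star_apply, Finset.mul_sum]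
        _ = ∑ x : L, ∑ b : R, ∑ q : L × R, star (vf (x, b)) * (T (x, b) q * wf q) := by
          rw [Fintype.sum_prod_type]
        _ = ∑ b : R, ∑ x : L, ∑ q : L × R, star (vf (x, b)) * (T (x, b) q * wf q) := by
          rw [Finset.sum_comm]
        _ = ∑ b : R, star (yf b) * yf b := Finset.sum_congr rfl fun b _ => core b
        _ = star yf ⬝ᵥ yf := by simp only [dotProduct, Pi.star_apply]
  have hCLMw : toEuclideanCLM (𝕜 := ℂ) T ((WithLp.equiv 2 (L × R → ℂ)).symm wf)
      = (WithLp.equiv 2 (L × R → ℂ)).symm (T *ᵥ wf) := rfl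
  have hinner : (inner ℂ ((WithLp.equiv 2 (L × R → ℂ)).symm vf)
        (toEuclideanCLM (𝕜 := ℂ) T ((WithLp.equiv 2 (L × R → ℂ)).symm wf)) : ℂ)
      = inner ℂ ((WithLp.equiv 2 (R → ℂ)).symm yf) ((WithLp.equiv 2 (R → ℂ)).symm yf) := by
    rw [hCLMw]
    show (T *ᵥ wf) ⬝ᵥ star vf = yf ⬝ᵥ star yf
    rw [dotProduct_comm, hdot, dotProduct_comm]
  have hre : ‖(WithLp.equiv 2 (R → ℂ)).symm yf‖ ^ 2
      = RCLike.re (inner ℂ ((WithLp.equiv 2 (L × R → ℂ)).symm vf)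
        (toEuclideanCLM (𝕜 := ℂ) T ((WithLp.equiv 2 (L × R → ℂ)).symm wf)) : ℂ) := by
    rw [hinner, inner_self_eq_norm_sq_to_K]
    norm_cast
  have hbound : RCLike.re (inner ℂ ((WithLp.equiv 2 (L × R → ℂ)).symm vf)
        (toEuclideanCLM (𝕜 := ℂ) T ((WithLp.equiv 2 (L × R → ℂ)).symm wf)) : ℂ)
      ≤ ‖(WithLp.equiv 2 (R → ℂ)).symm yf‖ * ‖z‖ := by
    calc RCLike.re (inner ℂ ((WithLp.equiv 2 (L × R → ℂ)).symm vf)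
          (toEuclideanCLM (𝕜 := ℂ) T ((WithLp.equiv 2 (L × R → ℂ)).symm wf)) : ℂ)
        ≤ ‖(WithLp.equiv 2 (L × R → ℂ)).symm vf‖
            * ‖toEuclideanCLM (𝕜 := ℂ) T ((WithLp.equiv 2 (L × R → ℂ)).symm wf)‖ :=
          re_inner_le_norm _ _
      _ ≤ ‖(WithLp.equiv 2 (L × R → ℂ)).symm vf‖
            * (opNorm T * ‖(WithLp.equiv 2 (L × R → ℂ)).symm wf‖) := by
          refine mul_le_mul_of_nonneg_left ?_ (norm_nonneg _)
          exact (toEuclideanCLM (𝕜 := ℂ) T).le_opNorm _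
      _ ≤ ‖(WithLp.equiv 2 (L × R → ℂ)).symm vf‖
            * ‖(WithLp.equiv 2 (L × R → ℂ)).symm wf‖ := by
          refine mul_le_mul_of_nonneg_left ?_ (norm_nonneg _)
          calc opNorm T * ‖(WithLp.equiv 2 (L × R → ℂ)).symm wf‖
              ≤ 1 * ‖(WithLp.equiv 2 (L × R → ℂ)).symm wf‖ :=
                mul_le_mul_of_nonneg_right hT (norm_nonneg _)
            _ = ‖(WithLp.equiv 2 (L × R → ℂ)).symm wf‖ := one_mul _
      _ = ‖(WithLp.equiv 2 (R → ℂ)).symm yf‖ * ‖z‖ := by rw [hnv, hnw]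
  rw [happ, one_mul]
  nlinarith [norm_nonneg ((WithLp.equiv 2 (R → ℂ)).symm yf), norm_nonneg z, hre, hbound]

end Rect

end CorAux
/-- If `σ_L` has rank at most `χ` and all normalized product correlations of
`σ_{LR} − σ_L ⊗ σ_R` are at most `δ`, then `‖σ_{LR} − σ_L ⊗ σ_R‖₁ ≤ χ²δ`. -/
theorem traceNorm_le_of_rank_and_correlations
    {L R : Type*} [Fintype L] [Fintype R] [DecidableEq L] [DecidableEq R]
    (σ : Matrix (L × R) (L × R) ℂ) (hσ : σ.PosSemidef) (htr : σ.trace = 1)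
    (χ : ℕ) (hrank : (ptraceR σ).rank ≤ χ) (δ : ℝ)
    (hCor : ∀ (A : Matrix L L ℂ) (B : Matrix R R ℂ), opNorm A ≤ 1 → opNorm B ≤ 1 →
      (((A ⊗ₖ B) * (σ - ptraceR σ ⊗ₖ ptraceL σ)).trace).re ≤ δ) :
    traceNorm (σ - ptraceR σ ⊗ₖ ptraceL σ) ≤ (χ : ℝ) ^ 2 * δ := by
  classical
  set σL : Matrix L L ℂ := ptraceR σ with hσL
  set σR : Matrix R R ℂ := ptraceL σ with hσR
  set M : Matrix (L × R) (L × R) ℂ := σ - σL ⊗ₖ σR with hMdef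
  have hσH : σ.IsHermitian := hσ.1
  have hLH : σL.IsHermitian := by
    ext a a'
    rw [conjTranspose_apply, hσL]
    simp only [ptraceR, Matrix.of_apply, star_sum]
    exact Finset.sum_congr rfl fun b _ => hσH.apply _ _
  have hRH : σR.IsHermitian := by
    ext b b'
    rw [conjTranspose_apply, hσR]
    simp only [ptraceL, Matrix.of_apply, star_sum]
    exact Finset.sum_congr rfl fun a _ => hσH.apply _ _
  have hMH : M.IsHermitian := by
    refine hσH.sub ?_
    show (σL ⊗ₖ σR)ᴴ = σL ⊗ₖ σR
    rw [CorAux.kron_conjTranspose, hLH.eq, hRH.eq]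
  -- δ is nonnegative
  have hδ0 : 0 ≤ δ := by
    have h00 := hCor 0 0 (by unfold opNorm; rw [map_zero, norm_zero]; exact zero_le_one)
      (by unfold opNorm; rw [map_zero, norm_zero]; exact zero_le_one)
    rwa [Matrix.zero_kronecker, Matrix.zero_mul, Matrix.trace_zero, Complex.zero_re] at h00
  -- dual operator T
  obtain ⟨T, hTu, hTN⟩ := CorAux.exists_dual M hMH
  have hT1 : opNorm T ≤ 1 := CorAux.opNorm_le_one_of_unitary hTu
  -- eigenvectors of σL
  set u : L → L → ℂ := fun a => ⇑(hLH.eigenvectorBasis a) with hu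
  have horth : ∀ a a', star (u a) ⬝ᵥ u a' = if a = a' then 1 else 0 := by
    intro a a'
    have h := orthonormal_iff_ite.mp hLH.eigenvectorBasis.orthonormal a a'
    rw [← h, dotProduct_comm]
    rfl
  have hnorm : ∀ a, ∑ x, Complex.normSq (u a x) = 1 := by
    intro a
    have h1 : ((∑ x, Complex.normSq (u a x) : ℝ) : ℂ) = star (u a) ⬝ᵥ u a := by
      push_cast
      simp only [dotProduct, Pi.star_apply]
      exact Finset.sum_congr rfl fun x _ => by
        rw [Complex.normSq_eq_conj_mul_self]; rfl
    rw [horth a a, if_pos rfl] at h1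
    exact_mod_cast h1
  set p : L → Matrix L L ℂ := fun a => vecMulVec (u a) (star (u a)) with hp
  have hpH : ∀ a, (p a)ᴴ = p a := fun a => CorAux.conjTranspose_vecMulVec (u a) (u a)
  have hppa : ∀ a, p a * p a = p a := by
    intro a
    rw [hp]
    rw [CorAux.vecMulVec_mul_vecMulVec, horth a a, if_pos rfl, one_smul]
  -- support
  set s : Finset L := Finset.univ.filter (fun a => hLH.eigenvalues a ≠ 0) with hs
  have hcard : s.card ≤ χ := by
    have h1 := hLH.rank_eq_card_non_zero_eigs
    have h2 : Fintype.card {i // hLH.eigenvalues i ≠ 0} = s.card :=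
      Fintype.card_subtype _
    rw [h1, h2] at hrank
    exact hrank
  -- vanishing lemmas
  have heig0 : ∀ a, hLH.eigenvalues a = 0 → σL *ᵥ u a = 0 := by
    intro a h
    have h1 := hLH.mulVec_eigenvectorBasis a
    rw [h] at h1
    rw [hu]
    simpa using h1
  have hvan : ∀ a, hLH.eigenvalues a = 0 →
      M * (p a ⊗ₖ (1 : Matrix R R ℂ)) = 0 ∧ (p a ⊗ₖ (1 : Matrix R R ℂ)) * M = 0 := by
    intro a ha
    have hLp : σL * p a = 0 := by
      rw [hp, CorAux.mul_vecMulVec, heig0 a ha, CorAux.vecMulVec_zero_left]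
    have hpL : p a * σL = 0 := by
      have h := congrArg Matrix.conjTranspose hLp
      rwa [Matrix.conjTranspose_mul, hpH a, hLH.eq, Matrix.conjTranspose_zero] at h
    have hPH : (p a ⊗ₖ (1 : Matrix R R ℂ))ᴴ = p a ⊗ₖ (1 : Matrix R R ℂ) := by
      rw [CorAux.kron_conjTranspose, hpH a, Matrix.conjTranspose_one]
    have hPP : (p a ⊗ₖ (1 : Matrix R R ℂ)) * (p a ⊗ₖ (1 : Matrix R R ℂ))
        = p a ⊗ₖ (1 : Matrix R R ℂ) := by
      rw [← Matrix.mul_kronecker_mul, hppa a, Matrix.one_mul]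
    have htr0 : ((p a ⊗ₖ (1 : Matrix R R ℂ)) * σ).trace = 0 := by
      rw [CorAux.trace_kron_one_mul, ← hσL, hpL, Matrix.trace_zero]
    obtain ⟨hσP, hPσ⟩ := CorAux.mul_proj_eq_zero hσ hPH hPP htr0
    have hkP : (σL ⊗ₖ σR) * (p a ⊗ₖ (1 : Matrix R R ℂ)) = 0 := by
      rw [← Matrix.mul_kronecker_mul, hLp, Matrix.zero_kronecker]
    have hPk : (p a ⊗ₖ (1 : Matrix R R ℂ)) * (σL ⊗ₖ σR) = 0 := by
      rw [← Matrix.mul_kronecker_mul, hpL, Matrix.zero_kronecker]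
    constructor
    · rw [hMdef, Matrix.sub_mul, hσP, hkP, sub_zero]
    · rw [hMdef, Matrix.mul_sub, hPσ, hPk, sub_zero]
  -- decomposition
  set A' : L → L → Matrix L L ℂ := fun a a' => vecMulVec (u a) (star (u a')) with hA'
  set B' : L → L → Matrix R R ℂ := fun a a' => Matrix.of fun b b' =>
      ∑ x, ∑ x', (starRingEnd ℂ) (u a x) * T (x, b) (x', b') * u a' x' with hB'
  have hkron : ∀ a a', (p a ⊗ₖ (1 : Matrix R R ℂ)) * T * (p a' ⊗ₖ (1 : Matrix R R ℂ))
      = A' a a' ⊗ₖ B' a a' := fun a a' => CorAux.proj_mul_mul_proj T (u a) (u a')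
  have hsump : ∑ a, p a = (1 : Matrix L L ℂ) := by
    have hVV : (hLH.eigenvectorUnitary : Matrix L L ℂ)
        * star (hLH.eigenvectorUnitary : Matrix L L ℂ) = 1 :=
      Matrix.mem_unitaryGroup_iff.mp hLH.eigenvectorUnitary.2
    ext x y
    have h2 := Matrix.ext_iff.mpr hVV x y
    rw [Matrix.mul_apply] at h2
    rw [Matrix.sum_apply, ← h2]
    refine Finset.sum_congr rfl fun a _ => ?_
    rw [hp]
    simp only [vecMulVec_apply, Pi.star_apply, Matrix.star_apply,
      Matrix.IsHermitian.eigenvectorUnitary_apply, hu]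
  have honekron : ∑ a, (p a ⊗ₖ (1 : Matrix R R ℂ)) = (1 : Matrix (L × R) (L × R) ℂ) := by
    rw [← CorAux.sum_kron, hsump, Matrix.one_kronecker_one]
  have hsum : ∑ a, ∑ a', (p a ⊗ₖ (1 : Matrix R R ℂ)) * T * (p a' ⊗ₖ (1 : Matrix R R ℂ)) = T := by
    calc ∑ a, ∑ a', (p a ⊗ₖ (1 : Matrix R R ℂ)) * T * (p a' ⊗ₖ (1 : Matrix R R ℂ))
        = ∑ a, (p a ⊗ₖ (1 : Matrix R R ℂ)) * T := by
          refine Finset.sum_congr rfl fun a _ => ?_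
          rw [← Finset.mul_sum, honekron, Matrix.mul_one]
      _ = T := by rw [← Finset.sum_mul, honekron, Matrix.one_mul]
  have htrace : ((T * M).trace).re = ∑ a, ∑ a', (((A' a a' ⊗ₖ B' a a') * M).trace).re := by
    have h2 : T * M = ∑ a, ∑ a', (A' a a' ⊗ₖ B' a a') * M := by
      conv_lhs => rw [← hsum]
      rw [Finset.sum_mul]
      refine Finset.sum_congr rfl fun a _ => ?_
      rw [Finset.sum_mul]
      exact Finset.sum_congr rfl fun a' _ => by rw [hkron a a']
    rw [h2, Matrix.trace_sum, Complex.re_sum]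
    refine Finset.sum_congr rfl fun a _ => ?_
    rw [Matrix.trace_sum, Complex.re_sum]
  have hzero : ∀ a a', hLH.eigenvalues a = 0 ∨ hLH.eigenvalues a' = 0 →
      ((A' a a' ⊗ₖ B' a a') * M).trace = 0 := by
    intro a a' h
    rw [← hkron a a']
    rcases h with h | h
    · rw [Matrix.trace_mul_comm, ← Matrix.mul_assoc, ← Matrix.mul_assoc,
        (hvan a h).1, Matrix.zero_mul, Matrix.zero_mul, Matrix.trace_zero]
    · rw [Matrix.mul_assoc ((p a ⊗ₖ (1 : Matrix R R ℂ)) * T), (hvan a' h).2,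
        Matrix.mul_zero, Matrix.trace_zero]
  have hterm : ∀ a a', (((A' a a' ⊗ₖ B' a a') * M).trace).re ≤ δ := by
    intro a a'
    exact hCor (A' a a') (B' a a')
      (CorAux.opNorm_vecMulVec_le (hnorm a) (hnorm a'))
      (CorAux.opNorm_block_le T hT1 (u a) (u a') (hnorm a) (hnorm a'))
  -- putting everything together
  rw [hTN, htrace]
  have hsplit : ∑ a, ∑ a', (((A' a a' ⊗ₖ B' a a') * M).trace).re
      = ∑ a ∈ s, ∑ a' ∈ s, (((A' a a' ⊗ₖ B' a a') * M).trace).re := by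
    have hinner : ∀ a, ∑ a', (((A' a a' ⊗ₖ B' a a') * M).trace).re
        = ∑ a' ∈ s, (((A' a a' ⊗ₖ B' a a') * M).trace).re := by
      intro a
      refine (Finset.sum_subset (Finset.subset_univ s) fun a' _ ha' => ?_).symm
      have h0 : hLH.eigenvalues a' = 0 := by
        by_contra hne
        exact ha' (Finset.mem_filter.mpr ⟨Finset.mem_univ _, hne⟩)
      rw [hzero a a' (Or.inr h0), Complex.zero_re]
    rw [Finset.sum_congr rfl fun a _ => hinner a]
    refine (Finset.sum_subset (Finset.subset_univ s) fun a _ ha => ?_).symm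
    refine Finset.sum_eq_zero fun a' _ => ?_
    have h0 : hLH.eigenvalues a = 0 := by
      by_contra hne
      exact ha (Finset.mem_filter.mpr ⟨Finset.mem_univ _, hne⟩)
    rw [hzero a a' (Or.inl h0), Complex.zero_re]
  rw [hsplit]
  have hle : ∑ a ∈ s, ∑ a' ∈ s, (((A' a a' ⊗ₖ B' a a') * M).trace).re
      ≤ ∑ _a ∈ s, ∑ _a' ∈ s, δ :=
    Finset.sum_le_sum fun a _ => Finset.sum_le_sum fun a' _ => hterm a a'
  refine le_trans hle ?_
  rw [Finset.sum_const, Finset.sum_const, nsmul_eq_mul, nsmul_eq_mul]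
  have hcardR : (s.card : ℝ) ≤ (χ : ℝ) := by exact_mod_cast hcard
  have hc0 : (0:ℝ) ≤ (s.card : ℝ) := Nat.cast_nonneg _
  have h1 : (s.card : ℝ) * (s.card : ℝ) ≤ (χ : ℝ) * (χ : ℝ) :=
    mul_le_mul hcardR hcardR hc0 (le_trans hc0 hcardR)
  have h2 := mul_le_mul_of_nonneg_right h1 hδ0
  nlinarith [h2]
end
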